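/- arXiv:2402.12468 — 8 statements merged into one kernel-verified Lean document; each statement's English description precedes it below -/
import Mathlib

section
/- Let N ≥ 1 and let L be a real (N+1)×(N+1) matrix (indexed by 0,1,…,N) all of whose row sums are zero. Define the N×N matrix L̂ by L̂_{ij} = L_{ij} − L_{0j} for i,j ∈ {1,…,N}. Then the characteristic polynomial of L factors as charpoly(L) = X · charpoly(L̂); in particular the eigenvalues of L̂ (with multiplicity) are exactly the eigenvalues of L with one zero eigenvalue removed. -/
open Matrix Polynomial

lemma my_charpoly_conj {n R : Type*} [DecidableEq n] [Fintype n] [CommRing R]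
    (P Q M : Matrix n n R) (h1 : P * Q = 1) :
    (P * M * Q).charpoly = M.charpoly := by
  have hmapC : (P.map (C : R → R[X])) * (Q.map C) = 1 := by
    have := congrArg (C : R →+* R[X]).mapMatrix h1
    simpa [RingHom.mapMatrix_apply] using this
  have key : charmatrix (P * M * Q) = P.map C * charmatrix M * Q.map C := by
    unfold charmatrix
    simp only [RingHom.mapMatrix_apply]
    rw [Matrix.mul_sub, Matrix.sub_mul, ← Matrix.map_mul, ← Matrix.map_mul]
    congr 1
    rw [Matrix.mul_assoc, scalar_commute (X : R[X]) (fun r => (Commute.all _ _)) (Q.map C),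
      ← Matrix.mul_assoc, hmapC, Matrix.one_mul]
  unfold Matrix.charpoly
  rw [key, det_mul, det_mul]
  have : (P.map (C : R → R[X])).det * (Q.map C).det = 1 := by
    rw [← det_mul, hmapC, det_one]
  calc (P.map (C : R → R[X])).det * (charmatrix M).det * (Q.map C).det
      = (charmatrix M).det * ((P.map (C : R → R[X])).det * (Q.map C).det) := by ring
    _ = (charmatrix M).det := by rw [this, mul_one]

lemma my_charpoly_one_zero : (0 : Matrix (Fin 1) (Fin 1) ℝ).charpoly = X := by
  unfold Matrix.charpoly
  rw [det_fin_one, charmatrix_apply_eq]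
  simp

/-- If `L` is a real `(N+1) × (N+1)` matrix with zero row sums, and
`L̂` is the `N × N` matrix with entries `L̂ i j = L (i+1) (j+1) - L 0 (j+1)`, then the
characteristic polynomial of `L` factors as `X` times the characteristic polynomial
of `L̂`. -/
theorem charpoly_factor_of_zero_row_sums (N : ℕ) (hN : 1 ≤ N)
    (L : Matrix (Fin (N + 1)) (Fin (N + 1)) ℝ)
    (hrow : ∀ i : Fin (N + 1), ∑ j, L i j = 0)
    (Lhat : Matrix (Fin N) (Fin N) ℝ)
    (hLhat : ∀ i j : Fin N, Lhat i j = L i.succ j.succ - L 0 j.succ) :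
    L.charpoly = Polynomial.X * Lhat.charpoly := by
  -- the equivalence Fin (N+1) ≃ Fin 1 ⊕ Fin N
  let e : Fin (N + 1) ≃ (Fin 1 ⊕ Fin N) :=
    { toFun := Fin.cases (Sum.inl 0) (fun i => Sum.inr i)
      invFun := Sum.elim (fun _ => 0) Fin.succ
      left_inv := by intro i; induction i using Fin.cases <;> simp
      right_inv := by rintro (x | x); (simp [Fin.fin_one_eq_zero x]); (simp) }
  have he0 : ∀ x : Fin 1, e.symm (Sum.inl x) = 0 := fun _ => rfl
  have heS : ∀ j : Fin N, e.symm (Sum.inr j) = j.succ := fun j => rfl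
  -- the blocks
  set r : Matrix (Fin 1) (Fin N) ℝ := Matrix.of (fun _ j => L 0 j.succ) with hr
  set u : Matrix (Fin N) (Fin 1) ℝ := Matrix.of (fun _ _ => 1) with hu
  set T : Matrix (Fin 1 ⊕ Fin N) (Fin 1 ⊕ Fin N) ℝ := fromBlocks 1 0 u 1 with hT
  set Ti : Matrix (Fin 1 ⊕ Fin N) (Fin 1 ⊕ Fin N) ℝ := fromBlocks 1 0 (-u) 1 with hTi
  set B : Matrix (Fin 1 ⊕ Fin N) (Fin 1 ⊕ Fin N) ℝ := fromBlocks 0 r 0 Lhat with hB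
  have hTTi : T * Ti = 1 := by
    rw [hT, hTi, fromBlocks_multiply]
    simp [fromBlocks_one]
  have hrowsum : ∀ i : Fin (N + 1), ∑ j : Fin N, L i j.succ = - L i 0 := by
    intro i
    have := hrow i
    rw [Fin.sum_univ_succ] at this
    linarith
  have hA : reindex e e L = T * B * Ti := by
    rw [hT, hTi, hB, fromBlocks_multiply, fromBlocks_multiply]
    ext i j
    rcases i with i | i <;> rcases j with j | j <;>
      simp only [reindex_apply, submatrix_apply, he0, heS, fromBlocks_apply₁₁,
        fromBlocks_apply₁₂, fromBlocks_apply₂₁, fromBlocks_apply₂₂]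
    · -- (inl, inl): L 0 0 = (...)
      simp only [Matrix.add_apply, Matrix.mul_apply, Matrix.zero_apply, Matrix.one_apply,
        Matrix.neg_apply, hr, hu, Matrix.of_apply, Fin.fin_one_eq_zero i, Fin.fin_one_eq_zero j]
      try simp [Fin.sum_univ_succ, hrowsum 0]
    · simp only [Matrix.add_apply, Matrix.mul_apply, Matrix.zero_apply, Matrix.one_apply,
        Matrix.neg_apply, hr, hu, Matrix.of_apply, Fin.fin_one_eq_zero i]
      try simp
    · simp only [Matrix.add_apply, Matrix.mul_apply, Matrix.zero_apply, Matrix.one_apply,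
        Matrix.neg_apply, hr, hu, Matrix.of_apply, Fin.fin_one_eq_zero j]
      try simp [hLhat, Finset.sum_sub_distrib, hrowsum i.succ, hrowsum 0]
      try ring
    · simp only [Matrix.add_apply, Matrix.mul_apply, Matrix.zero_apply, Matrix.one_apply,
        Matrix.neg_apply, hr, hu, Matrix.of_apply]
      try simp [hLhat, Matrix.one_apply, Finset.mul_sum, Finset.sum_ite_eq', mul_comm]
  calc L.charpoly = (reindex e e L).charpoly := (charpoly_reindex e L).symm
    _ = (T * B * Ti).charpoly := by rw [hA]
    _ = B.charpoly := my_charpoly_conj T Ti B hTTi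
    _ = (0 : Matrix (Fin 1) (Fin 1) ℝ).charpoly * Lhat.charpoly := by
          rw [hB]; exact charpoly_fromBlocks_zero₂₁ 0 r Lhat
    _ = X * Lhat.charpoly := by rw [my_charpoly_one_zero]
end

section
/- Let L̃ ∈ ℝ^{N×N} be symmetric and let M = I_N ⊗ A − L̃ ⊗ (B K). Then for every complex number μ, μ belongs to the spectrum of M (viewed as a complex matrix) if and only if there exists a real eigenvalue λ of L̃ such that μ belongs to the spectrum of A − λ·(B K) (viewed as a complex matrix). Consequently, all eigenvalues of M have negative real part if and only if for every eigenvalue λ of L̃ all eigenvalues of A − λ·(B K) have negative real part. -/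
open Matrix
open scoped Kronecker

lemma mem_spectrum_iff_det'' {p : Type*} [Fintype p] [DecidableEq p]
    (X : Matrix p p ℂ) (μ : ℂ) :
    μ ∈ spectrum ℂ X ↔ (μ • (1 : Matrix p p ℂ) - X).det = 0 := by
  rw [spectrum.mem_iff, Algebra.algebraMap_eq_smul_one, Matrix.isUnit_iff_isUnit_det,
    isUnit_iff_ne_zero, not_not]

/-- For `L̃` symmetric and `M = I_N ⊗ A - L̃ ⊗ (B K)`, a complex
number `μ` is in the spectrum of `M` (over `ℂ`) iff it is in the spectrum of
`A - λ (B K)` (over `ℂ`) for some real eigenvalue `λ` of `L̃`; consequently `M` is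
Hurwitz iff each `A - λ (B K)` is Hurwitz. -/
theorem spectrum_kronecker_consensus (n m N : ℕ)
    (A : Matrix (Fin n) (Fin n) ℝ) (B : Matrix (Fin n) (Fin m) ℝ)
    (K : Matrix (Fin m) (Fin n) ℝ) (Ltil : Matrix (Fin N) (Fin N) ℝ)
    (hL : Ltil.IsSymm)
    (M : Matrix (Fin N × Fin n) (Fin N × Fin n) ℝ)
    (hM : M = (1 : Matrix (Fin N) (Fin N) ℝ) ⊗ₖ A - Ltil ⊗ₖ (B * K)) :
    (∀ μ : ℂ, μ ∈ spectrum ℂ (M.map (algebraMap ℝ ℂ)) ↔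
        ∃ lam : ℝ, lam ∈ spectrum ℝ Ltil ∧
          μ ∈ spectrum ℂ ((A - lam • (B * K)).map (algebraMap ℝ ℂ))) ∧
    ((∀ μ ∈ spectrum ℂ (M.map (algebraMap ℝ ℂ)), μ.re < 0) ↔
      ∀ lam ∈ spectrum ℝ Ltil,
        ∀ μ ∈ spectrum ℂ ((A - lam • (B * K)).map (algebraMap ℝ ℂ)), μ.re < 0) := by
  classical
  set f : ℝ →+* ℂ := algebraMap ℝ ℂ with hf
  have hH : Ltil.IsHermitian := by
    rw [Matrix.IsHermitian, conjTranspose_eq_transpose_of_trivial]; exact hL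
  set d : Fin N → ℝ := hH.eigenvalues with hd
  set U : Matrix (Fin N) (Fin N) ℝ := (hH.eigenvectorUnitary : Matrix (Fin N) (Fin N) ℝ) with hU
  have hspec : spectrum ℝ Ltil = Set.range d := hH.spectrum_real_eq_range_eigenvalues
  have hLU : Ltil = U * Matrix.diagonal d * Uᵀ := by
    have h := hH.spectral_theorem
    rw [RCLike.ofReal_real_eq_id] at h
    simpa [Matrix.star_eq_conjTranspose, conjTranspose_eq_transpose_of_trivial] using h
  have hUU : U * Uᵀ = 1 := by
    have h := (Matrix.mem_unitaryGroup_iff).mp hH.eigenvectorUnitary.2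
    simpa [Matrix.star_eq_conjTranspose, conjTranspose_eq_transpose_of_trivial] using h
  -- complex versions
  set Ac : Matrix (Fin n) (Fin n) ℂ := A.map f
  set Wc : Matrix (Fin n) (Fin n) ℂ := (B * K).map f
  set Uc : Matrix (Fin N) (Fin N) ℂ := U.map f
  have hUcU : Uc * Ucᵀ = 1 := by
    rw [← Matrix.transpose_map, ← Matrix.map_mul, hUU, Matrix.map_one f (map_zero f) (map_one f)]
  -- M over ℂ, conjugated
  have hMc : M.map f =
      (Uc ⊗ₖ (1 : Matrix (Fin n) (Fin n) ℂ)) *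
        ((1 : Matrix (Fin N) (Fin N) ℂ) ⊗ₖ Ac - (Matrix.diagonal (f ∘ d)) ⊗ₖ Wc) *
        (Ucᵀ ⊗ₖ (1 : Matrix (Fin n) (Fin n) ℂ)) := by
    rw [Matrix.mul_sub, Matrix.sub_mul, ← Matrix.mul_kronecker_mul,
      ← Matrix.mul_kronecker_mul, ← Matrix.mul_kronecker_mul, ← Matrix.mul_kronecker_mul]
    have hdc : Uc * Matrix.diagonal (⇑f ∘ d) * Ucᵀ = Ltil.map f := by
      rw [hLU, ← Matrix.transpose_map, Matrix.map_mul, Matrix.map_mul,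
        Matrix.diagonal_map (map_zero f)]
      rfl
    rw [Matrix.one_mul, Matrix.mul_one, Matrix.mul_one, hUcU, hdc, hM]
    ext ⟨i, j⟩ ⟨i', j'⟩
    simp [Ac, Wc, Matrix.sub_apply, Matrix.map_apply, Matrix.kroneckerMap_apply,
      Matrix.one_apply, apply_ite f, -Matrix.map_mul]
  -- determinant identity
  have key : ∀ μ : ℂ, (μ • (1 : Matrix (Fin N × Fin n) (Fin N × Fin n) ℂ) - M.map f).det =
      ∏ i : Fin N, (μ • (1 : Matrix (Fin n) (Fin n) ℂ) - (A - d i • (B * K)).map f).det := by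
    intro μ
    have h1 : μ • (1 : Matrix (Fin N × Fin n) (Fin N × Fin n) ℂ) - M.map f =
        (Uc ⊗ₖ (1 : Matrix (Fin n) (Fin n) ℂ)) *
          (μ • 1 - ((1 : Matrix (Fin N) (Fin N) ℂ) ⊗ₖ Ac - (Matrix.diagonal (f ∘ d)) ⊗ₖ Wc)) *
          (Ucᵀ ⊗ₖ (1 : Matrix (Fin n) (Fin n) ℂ)) := by
      have hsmul : (Uc ⊗ₖ (1 : Matrix (Fin n) (Fin n) ℂ)) * (μ • 1) *
          (Ucᵀ ⊗ₖ (1 : Matrix (Fin n) (Fin n) ℂ)) = μ • 1 := by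
        rw [mul_smul_comm, Matrix.mul_one, smul_mul_assoc, ← Matrix.mul_kronecker_mul,
          hUcU, Matrix.one_mul, Matrix.one_kronecker_one]
      conv_rhs => rw [Matrix.mul_sub, Matrix.sub_mul, hsmul]
      rw [hMc]
    have hdet1 : (Uc ⊗ₖ (1 : Matrix (Fin n) (Fin n) ℂ)).det *
        (Ucᵀ ⊗ₖ (1 : Matrix (Fin n) (Fin n) ℂ)).det = 1 := by
      rw [← Matrix.det_mul, ← Matrix.mul_kronecker_mul, hUcU, Matrix.one_mul,
        Matrix.one_kronecker_one, Matrix.det_one]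
    have h2 : (μ • (1 : Matrix (Fin N × Fin n) (Fin N × Fin n) ℂ) - M.map f).det =
        (μ • 1 - ((1 : Matrix (Fin N) (Fin N) ℂ) ⊗ₖ Ac - (Matrix.diagonal (f ∘ d)) ⊗ₖ Wc)).det := by
      rw [h1, Matrix.det_mul, Matrix.det_mul, mul_comm, ← mul_assoc, mul_comm ((Ucᵀ ⊗ₖ 1).det),
        hdet1, one_mul]
    rw [h2]
    have h3 : (μ • 1 - ((1 : Matrix (Fin N) (Fin N) ℂ) ⊗ₖ Ac - (Matrix.diagonal (f ∘ d)) ⊗ₖ Wc)) =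
        (Matrix.blockDiagonal (fun i => μ • (1 : Matrix (Fin n) (Fin n) ℂ)
            - (A - d i • (B * K)).map f)).submatrix
          (Equiv.prodComm (Fin N) (Fin n)) (Equiv.prodComm (Fin N) (Fin n)) := by
      ext ⟨i, j⟩ ⟨i', j'⟩
      by_cases h : i = i'
      · subst h
        simp only [Matrix.sub_apply, Matrix.smul_apply, Matrix.one_apply, Matrix.submatrix_apply,
          Equiv.prodComm_apply, Prod.swap_prod_mk, Matrix.kroneckerMap_apply,
          Matrix.blockDiagonal_apply, Matrix.map_apply, Matrix.diagonal_apply, Prod.mk.injEq,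
          true_and, _root_.map_sub, Matrix.smul_apply, smul_eq_mul, _root_.map_mul, if_true,
          eq_self_iff_true]
        by_cases hj : j = j' <;> simp [hj, Ac, Wc, -Matrix.map_mul] <;> ring
      · simp [Matrix.sub_apply, Matrix.smul_apply, Matrix.one_apply, Matrix.kroneckerMap_apply,
          Matrix.blockDiagonal_apply, Matrix.diagonal_apply, Prod.ext_iff, h]
    rw [h3, Matrix.det_submatrix_equiv_self, Matrix.det_blockDiagonal]
  -- part 1
  have part1 : ∀ μ : ℂ, μ ∈ spectrum ℂ (M.map f) ↔
      ∃ lam : ℝ, lam ∈ spectrum ℝ Ltil ∧ μ ∈ spectrum ℂ ((A - lam • (B * K)).map f) := by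
    intro μ
    rw [mem_spectrum_iff_det'', key, Finset.prod_eq_zero_iff]
    constructor
    · rintro ⟨i, -, hi⟩
      exact ⟨d i, hspec ▸ ⟨i, rfl⟩, (mem_spectrum_iff_det'' _ μ).2 hi⟩
    · rintro ⟨lam, hlam, hmu⟩
      rw [hspec] at hlam
      obtain ⟨i, rfl⟩ := hlam
      exact ⟨i, Finset.mem_univ i, (mem_spectrum_iff_det'' _ μ).1 hmu⟩
  refine ⟨part1, ?_⟩
  constructor
  · intro h lam hlam μ hmu
    exact h μ ((part1 μ).2 ⟨lam, hlam, hmu⟩)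
  · intro h μ hmu
    obtain ⟨lam, hlam, hmu'⟩ := (part1 μ).1 hmu
    exact h lam hlam μ hmu'
end

section
/- Let A ∈ ℝ^{n×n}, B ∈ ℝ^{n×m}, let X ∈ ℝ^{n×n} be symmetric positive definite and γ > 0 satisfy that A X + X A^⊤ − γ B B^⊤ is negative definite. Fix λ₁ > 0 and set K = (γ/(2λ₁)) B^⊤ X^{−1}. Then for every real λ ≥ λ₁, the matrix (A − λ B K) X + X (A − λ B K)^⊤ is negative definite. -/
open Matrix

/-- If `X ≻ 0` and `γ > 0` satisfy `A X + X Aᵀ - γ B Bᵀ ≺ 0`, then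
with `K = (γ / (2 λ₁)) Bᵀ X⁻¹` for a fixed `λ₁ > 0`, every `λ ≥ λ₁` makes
`(A - λ B K) X + X (A - λ B K)ᵀ` negative definite. -/
theorem gain_stabilizes_all_eigenvalues (n m : ℕ)
    (A : Matrix (Fin n) (Fin n) ℝ) (B : Matrix (Fin n) (Fin m) ℝ)
    (X : Matrix (Fin n) (Fin n) ℝ) (hX : X.PosDef) (γ : ℝ) (hγ : 0 < γ)
    (hineq : ∀ x : Fin n → ℝ, x ≠ 0 → x ⬝ᵥ ((A * X + X * Aᵀ - γ • (B * Bᵀ)) *ᵥ x) < 0)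
    (lam₁ : ℝ) (hlam₁ : 0 < lam₁)
    (K : Matrix (Fin m) (Fin n) ℝ) (hK : K = (γ / (2 * lam₁)) • (Bᵀ * X⁻¹)) :
    ∀ lam : ℝ, lam₁ ≤ lam →
      ∀ x : Fin n → ℝ, x ≠ 0 →
        x ⬝ᵥ (((A - lam • (B * K)) * X + X * (A - lam • (B * K))ᵀ) *ᵥ x) < 0 := by
  intro lam hlam x hx
  have hXinv : X⁻¹ * X = 1 := Matrix.nonsing_inv_mul X (isUnit_iff_ne_zero.mpr hX.det_pos.ne')
  have hXsym : Xᵀ = X := hX.isHermitian.eq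
  set c : ℝ := γ / (2 * lam₁) with hc
  have h1 : (B * K) * X = c • (B * Bᵀ) := by
    rw [hK]
    rw [Matrix.mul_smul, Matrix.smul_mul]
    congr 1
    rw [Matrix.mul_assoc, Matrix.mul_assoc, hXinv, Matrix.mul_one]
  have h2 : X * (B * K)ᵀ = c • (B * Bᵀ) := by
    have : (B * K)ᵀ = c • (X⁻¹ * (B * Bᵀ)) := by
      rw [hK, Matrix.mul_smul, Matrix.transpose_smul, Matrix.transpose_mul,
        Matrix.transpose_mul, Matrix.transpose_transpose, Matrix.transpose_nonsing_inv, hXsym,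
        Matrix.mul_assoc]
    rw [this, Matrix.mul_smul, ← Matrix.mul_assoc]
    have hXX : X * X⁻¹ = 1 := Matrix.mul_nonsing_inv X (isUnit_iff_ne_zero.mpr hX.det_pos.ne')
    rw [hXX, Matrix.one_mul]
  have hM : (A - lam • (B * K)) * X + X * (A - lam • (B * K))ᵀ =
      (A * X + X * Aᵀ - γ • (B * Bᵀ)) - (2 * lam * c - γ) • (B * Bᵀ) := by
    rw [Matrix.sub_mul, Matrix.transpose_sub, Matrix.mul_sub, Matrix.transpose_smul,
      Matrix.smul_mul, Matrix.mul_smul, h1, h2]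
    ext i j
    simp [Matrix.sub_apply, Matrix.add_apply, Matrix.smul_apply]
    ring
  rw [hM]
  have hcoef : 0 ≤ 2 * lam * c - γ := by
    rw [hc, sub_nonneg, ← mul_div_assoc, le_div_iff₀ (by positivity)]
    nlinarith
  have hBB : 0 ≤ x ⬝ᵥ ((B * Bᵀ) *ᵥ x) := by
    rw [← Matrix.mulVec_mulVec, Matrix.dotProduct_mulVec, Matrix.mulVec_transpose]
    exact Finset.sum_nonneg fun i _ => mul_self_nonneg _
  calc x ⬝ᵥ (((A * X + X * Aᵀ - γ • (B * Bᵀ)) - (2 * lam * c - γ) • (B * Bᵀ)) *ᵥ x)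
      = x ⬝ᵥ ((A * X + X * Aᵀ - γ • (B * Bᵀ)) *ᵥ x)
        - (2 * lam * c - γ) * (x ⬝ᵥ ((B * Bᵀ) *ᵥ x)) := by
        rw [Matrix.sub_mulVec, dotProduct_sub, Matrix.smul_mulVec, dotProduct_smul,
          smul_eq_mul]
    _ < 0 := by
        have := hineq x hx
        nlinarith
end

section
/- Suppose there exists β > 0 such that the block matrix [[P M + M^⊤ P + β P, P F],[F^⊤ P, −β Q]] is negative semidefinite. Then the ellipsoid ε(P) is invariant for the perturbed error system: for every disturbance ω and every solution e of the perturbed error system with e(0)^⊤ P e(0) ≤ 1, one has e(t)^⊤ P e(t) ≤ 1 for all t ≥ 0. -/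
open Matrix
open scoped Kronecker

private lemma dot_transpose_mulVec {ι κ : Type*} [Fintype ι] [Fintype κ]
    (A : Matrix κ ι ℝ) (u : ι → ℝ) (v : κ → ℝ) :
    u ⬝ᵥ (Aᵀ *ᵥ v) = (A *ᵥ u) ⬝ᵥ v := by
  rw [Matrix.dotProduct_mulVec, Matrix.vecMul_transpose]

/-- If there is `β > 0` such that the block matrix
`[[P M + Mᵀ P + β P, P F], [Fᵀ P, -β Q]]` is negative semidefinite, then the
ellipsoid `ε(P) = {x : xᵀ P x ≤ 1}` is invariant for the perturbed error system
`e' = M e + F ω` with disturbances satisfying `ωᵀ Q ω ≤ 1`.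
Here `M = I_N ⊗ A - L̃ ⊗ (B K)` and `F = 1_N ⊗ E`. -/
theorem lmi_implies_invariant_ellipsoid (n m N p : ℕ)
    (A : Matrix (Fin n) (Fin n) ℝ) (B : Matrix (Fin n) (Fin m) ℝ)
    (K : Matrix (Fin m) (Fin n) ℝ) (Ltil : Matrix (Fin N) (Fin N) ℝ)
    (E : Matrix (Fin n) (Fin p) ℝ)
    (Q : Matrix (Fin p) (Fin p) ℝ) (hQ : Q.PosDef)
    (P : Matrix (Fin N × Fin n) (Fin N × Fin n) ℝ) (hP : P.PosDef)
    (M : Matrix (Fin N × Fin n) (Fin N × Fin n) ℝ)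
    (hM : M = (1 : Matrix (Fin N) (Fin N) ℝ) ⊗ₖ A - Ltil ⊗ₖ (B * K))
    (F : Matrix (Fin N × Fin n) (Fin p) ℝ)
    (hF : ∀ (ij : Fin N × Fin n) (k : Fin p), F ij k = E ij.2 k)
    (β : ℝ) (hβ : 0 < β)
    (hLMI : ∀ v : (Fin N × Fin n) ⊕ Fin p → ℝ,
      v ⬝ᵥ ((Matrix.fromBlocks (P * M + Mᵀ * P + β • P) (P * F) (Fᵀ * P) (-β • Q)) *ᵥ v) ≤ 0) :
    ∀ ω : ℝ → (Fin p → ℝ), (∀ t : ℝ, 0 ≤ t → ω t ⬝ᵥ (Q *ᵥ ω t) ≤ 1) →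
      ∀ e : ℝ → (Fin N × Fin n → ℝ),
        (∀ t : ℝ, 0 ≤ t → HasDerivAt e (M *ᵥ e t + F *ᵥ ω t) t) →
        e 0 ⬝ᵥ (P *ᵥ e 0) ≤ 1 →
        ∀ t : ℝ, 0 ≤ t → e t ⬝ᵥ (P *ᵥ e t) ≤ 1 := by
  intro ω hω e he he0 t ht
  set d : ℝ → (Fin N × Fin n → ℝ) := fun s => M *ᵥ e s + F *ᵥ ω s with hd
  -- derivative of the quadratic form
  have hV : ∀ s : ℝ, 0 ≤ s →
      HasDerivAt (fun u => e u ⬝ᵥ (P *ᵥ e u))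
        (d s ⬝ᵥ (P *ᵥ e s) + e s ⬝ᵥ (P *ᵥ d s)) s := by
    intro s hs
    have h := (hasDerivAt_pi).1 (he s hs)
    have h1 : HasDerivAt (fun u => ∑ i, e u i * (P *ᵥ e u) i)
        (∑ i, (d s i * (P *ᵥ e s) i + e s i * (P *ᵥ d s) i)) s := by
      apply HasDerivAt.fun_sum
      intro i _
      have hPi : HasDerivAt (fun u => (P *ᵥ e u) i) ((P *ᵥ d s) i) s := by
        simp only [Matrix.mulVec, dotProduct]
        exact HasDerivAt.fun_sum fun j _ => (h j).const_mul (P i j)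
      exact (h i).mul hPi
    have : (∑ i, (d s i * (P *ᵥ e s) i + e s i * (P *ᵥ d s) i))
        = d s ⬝ᵥ (P *ᵥ e s) + e s ⬝ᵥ (P *ᵥ d s) := by
      simp [dotProduct, Finset.sum_add_distrib]
    rw [this] at h1
    exact h1
  -- key inequality from LMI
  have hkey : ∀ s : ℝ, 0 ≤ s →
      d s ⬝ᵥ (P *ᵥ e s) + e s ⬝ᵥ (P *ᵥ d s) ≤ β * (1 - e s ⬝ᵥ (P *ᵥ e s)) := by
    intro s hs
    have hv := hLMI (Sum.elim (e s) (ω s))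
    rw [Matrix.fromBlocks_mulVec, sumElim_dotProduct_sumElim] at hv
    simp only [Matrix.add_mulVec, dotProduct_add, Matrix.smul_mulVec,
      dotProduct_smul, ← Matrix.mulVec_mulVec, smul_eq_mul, neg_smul,
      Matrix.neg_mulVec, dotProduct_neg, Sum.elim_comp_inl, Sum.elim_comp_inr,
      dot_transpose_mulVec] at hv
    have hq := hω s hs
    have hb : β * (ω s ⬝ᵥ (Q *ᵥ ω s)) ≤ β * 1 := mul_le_mul_of_nonneg_left hq hβ.le
    simp only [hd, Matrix.mulVec_add, dotProduct_add]
    have hexp : (M *ᵥ e s + F *ᵥ ω s) ⬝ᵥ (P *ᵥ e s)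
        = (M *ᵥ e s) ⬝ᵥ (P *ᵥ e s) + (F *ᵥ ω s) ⬝ᵥ (P *ᵥ e s) :=
      add_dotProduct _ _ _
    rw [hexp]
    linarith
  -- the auxiliary function W
  set W : ℝ → ℝ := fun u => (e u ⬝ᵥ (P *ᵥ e u) - 1) * Real.exp (β * u) with hW
  have hWd : ∀ s : ℝ, 0 ≤ s →
      HasDerivAt W ((d s ⬝ᵥ (P *ᵥ e s) + e s ⬝ᵥ (P *ᵥ d s)) * Real.exp (β * s)
        + (e s ⬝ᵥ (P *ᵥ e s) - 1) * (Real.exp (β * s) * β)) s := by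
    intro s hs
    have h1 := (hV s hs).sub_const 1
    have h2 : HasDerivAt (fun u : ℝ => Real.exp (β * u)) (Real.exp (β * s) * β) s := by
      have := ((hasDerivAt_id s).const_mul β).exp
      simpa using this
    exact h1.mul h2
  have hmono : AntitoneOn W (Set.Ici (0 : ℝ)) := by
    apply antitoneOn_of_deriv_nonpos (convex_Ici 0)
    · intro s hs
      exact (hWd s hs).continuousAt.continuousWithinAt
    · intro s hs
      rw [interior_Ici] at hs
      exact (hWd s (le_of_lt hs)).differentiableAt.differentiableWithinAt
    · intro s hs
      rw [interior_Ici] at hs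
      rw [(hWd s (le_of_lt hs)).deriv]
      have hk := hkey s (le_of_lt hs)
      have hex : (0:ℝ) < Real.exp (β * s) := Real.exp_pos _
      nlinarith [mul_le_mul_of_nonneg_right hk hex.le]
  have hWt : W t ≤ W 0 := hmono (Set.self_mem_Ici) (Set.mem_Ici.2 ht) ht
  have hW0 : W 0 ≤ 0 := by
    simp only [hW, mul_zero, Real.exp_zero, mul_one]
    linarith
  have : (e t ⬝ᵥ (P *ᵥ e t) - 1) * Real.exp (β * t) ≤ 0 := le_trans hWt hW0
  nlinarith [Real.exp_pos (β * t)]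
end

section
/- Suppose the ellipsoid ε(P) is invariant for the perturbed error system, i.e., for every disturbance ω and every solution e of the perturbed error system with e(0)^⊤ P e(0) ≤ 1, one has e(t)^⊤ P e(t) ≤ 1 for all t ≥ 0. Then for all vectors x ∈ ℝ^{nN} and w ∈ ℝ^p with w^⊤ Q w ≤ x^⊤ P x, the following inequality holds: x^⊤ (P M + M^⊤ P) x + 2 x^⊤ P F w ≤ 0. -/
open Matrix
open scoped Kronecker

open NormedSpace in
lemma exists_global_solution {ι : Type} [Fintype ι] [DecidableEq ι]
    (M : Matrix ι ι ℝ) (c x0 : ι → ℝ) :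
    ∃ e : ℝ → ι → ℝ, e 0 = x0 ∧ ∀ t : ℝ, HasDerivAt e (M *ᵥ e t + c) t := by
  letI : SeminormedRing (Matrix (ι ⊕ Unit) (ι ⊕ Unit) ℝ) := Matrix.linftyOpSemiNormedRing
  letI : NormedRing (Matrix (ι ⊕ Unit) (ι ⊕ Unit) ℝ) := Matrix.linftyOpNormedRing
  letI : NormedAlgebra ℝ (Matrix (ι ⊕ Unit) (ι ⊕ Unit) ℝ) := Matrix.linftyOpNormedAlgebra
  set Mt : Matrix (ι ⊕ Unit) (ι ⊕ Unit) ℝ :=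
    Matrix.fromBlocks M (Matrix.of fun i (_ : Unit) => c i) 0 0 with hMt
  set z0 : ι ⊕ Unit → ℝ := Sum.elim x0 (fun _ => 1) with hz0
  let φ : Matrix (ι ⊕ Unit) (ι ⊕ Unit) ℝ →ₗ[ℝ] ((ι ⊕ Unit) → ℝ) :=
    { toFun := fun G => G *ᵥ z0
      map_add' := fun G H => Matrix.add_mulVec G H z0
      map_smul' := fun r G => by simp [Matrix.smul_mulVec] }
  let φc := LinearMap.toContinuousLinearMap φ
  set z : ℝ → (ι ⊕ Unit) → ℝ := fun t => exp (t • Mt) *ᵥ z0 with hzdef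
  have hzderiv : ∀ t : ℝ, HasDerivAt z (Mt *ᵥ z t) t := by
    intro t
    have h1 := hasDerivAt_exp_smul_const' (𝕂 := ℝ) Mt t
    have h2 := φc.hasFDerivAt.comp_hasDerivAt t h1
    have h3 : φc (Mt * exp (t • Mt)) = Mt *ᵥ z t := by
      show (Mt * exp (t • Mt)) *ᵥ z0 = Mt *ᵥ (exp (t • Mt) *ᵥ z0)
      rw [Matrix.mulVec_mulVec]
    rw [← h3]
    exact h2
  have hz0eq : z 0 = z0 := by
    simp [hzdef, exp_zero, Matrix.one_mulVec]
  have hbotderiv : ∀ t : ℝ, HasDerivAt (fun u => z u (Sum.inr ())) 0 t := by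
    intro t
    have h := hasDerivAt_pi.1 (hzderiv t) (Sum.inr ())
    have : (Mt *ᵥ z t) (Sum.inr ()) = 0 := by
      simp [Matrix.mulVec, dotProduct, Fintype.sum_sum_type, hMt]
    rwa [this] at h
  have hbot : ∀ t : ℝ, z t (Sum.inr ()) = 1 := by
    intro t
    have hc := is_const_of_deriv_eq_zero (f := fun u => z u (Sum.inr ()))
      (fun u => (hbotderiv u).differentiableAt)
      (fun u => (hbotderiv u).deriv) t 0
    rw [hc, hz0eq]
    simp [hz0]
  refine ⟨fun t i => z t (Sum.inl i), ?_, ?_⟩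
  · funext i; show z 0 (Sum.inl i) = x0 i; rw [hz0eq]; simp [hz0]
  · intro t
    have h := hasDerivAt_pi.2 (fun i => hasDerivAt_pi.1 (hzderiv t) (Sum.inl i))
    have heq : (fun i => (Mt *ᵥ z t) (Sum.inl i))
        = M *ᵥ (fun i => z t (Sum.inl i)) + c := by
      funext i
      simp [Matrix.mulVec, dotProduct, Fintype.sum_sum_type, hMt, hbot t]
    rwa [heq] at h

lemma hasDerivAt_quad {ι : Type} [Fintype ι] (P : Matrix ι ι ℝ)
    (e : ℝ → ι → ℝ) (v : ι → ℝ) (t : ℝ) (he : HasDerivAt e v t) :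
    HasDerivAt (fun u => e u ⬝ᵥ (P *ᵥ e u)) (v ⬝ᵥ (P *ᵥ e t) + e t ⬝ᵥ (P *ᵥ v)) t := by
  have hco : ∀ i, HasDerivAt (fun u => e u i) (v i) t := fun i => hasDerivAt_pi.1 he i
  have h : HasDerivAt (fun u => ∑ i, e u i * ∑ j, P i j * e u j)
      (∑ i, (v i * ∑ j, P i j * e t j + e t i * ∑ j, P i j * v j)) t :=
    HasDerivAt.fun_sum fun i _ =>
      (hco i).mul (HasDerivAt.fun_sum fun j _ => (hco j).const_mul (P i j))
  have h1 : (fun u => e u ⬝ᵥ (P *ᵥ e u)) = fun u => ∑ i, e u i * ∑ j, P i j * e u j := by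
    funext u; simp [dotProduct, Matrix.mulVec]
  have h2 : v ⬝ᵥ (P *ᵥ e t) + e t ⬝ᵥ (P *ᵥ v)
      = ∑ i, (v i * ∑ j, P i j * e t j + e t i * ∑ j, P i j * v j) := by
    simp [dotProduct, Matrix.mulVec, Finset.sum_add_distrib]
  rw [h1, h2]
  exact h

lemma deriv_nonpos_at_max {V : ℝ → ℝ} {d : ℝ} (h : HasDerivAt V d 0)
    (hle : ∀ t : ℝ, 0 ≤ t → V t ≤ V 0) : d ≤ 0 := by
  have h' : HasDerivWithinAt V d (Set.Ioi 0) 0 := h.hasDerivWithinAt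
  rw [hasDerivWithinAt_iff_tendsto_slope' (by simp)] at h'
  refine le_of_tendsto h' ?_
  filter_upwards [self_mem_nhdsWithin] with t ht
  have ht0 : 0 < t := ht
  have : slope V 0 t = (V t - V 0) / t := by
    rw [slope_def_field, sub_zero]
  rw [this]
  exact div_nonpos_of_nonpos_of_nonneg (by linarith [hle t ht0.le]) ht0.le

lemma quad_expand {ι κ : Type} [Fintype ι] [Fintype κ]
    (P M : Matrix ι ι ℝ) (F : Matrix ι κ ℝ) (hPsym : Pᵀ = P)
    (u : ι → ℝ) (ω : κ → ℝ) :
    (M *ᵥ u + F *ᵥ ω) ⬝ᵥ (P *ᵥ u) + u ⬝ᵥ (P *ᵥ (M *ᵥ u + F *ᵥ ω))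
      = u ⬝ᵥ ((P * M + Mᵀ * P) *ᵥ u) + 2 * (u ⬝ᵥ ((P * F) *ᵥ ω)) := by
  have h1 : (M *ᵥ u) ⬝ᵥ (P *ᵥ u) = (u ᵥ* (Mᵀ * P)) ⬝ᵥ u := by
    rw [Matrix.dotProduct_mulVec, Matrix.vecMul_mulVec]
  have h2 : (F *ᵥ ω) ⬝ᵥ (P *ᵥ u) = (u ᵥ* (P * F)) ⬝ᵥ ω := by
    rw [dotProduct_comm, Matrix.dotProduct_mulVec, Matrix.vecMul_mulVec, hPsym]
  have h3 : u ⬝ᵥ (P *ᵥ (M *ᵥ u)) = (u ᵥ* (P * M)) ⬝ᵥ u := by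
    rw [Matrix.mulVec_mulVec, Matrix.dotProduct_mulVec]
  have h4 : u ⬝ᵥ (P *ᵥ (F *ᵥ ω)) = (u ᵥ* (P * F)) ⬝ᵥ ω := by
    rw [Matrix.mulVec_mulVec, Matrix.dotProduct_mulVec]
  rw [add_dotProduct, Matrix.mulVec_add, dotProduct_add,
    Matrix.add_mulVec, dotProduct_add, h1, h2, h3, h4,
    Matrix.dotProduct_mulVec, Matrix.dotProduct_mulVec, Matrix.dotProduct_mulVec]
  ring

/-- If the ellipsoid `ε(P)` is invariant for the perturbed error
system `e' = M e + F ω`, then for all `x, w` with `wᵀ Q w ≤ xᵀ P x` we have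
`xᵀ (P M + Mᵀ P) x + 2 xᵀ P F w ≤ 0`. -/
theorem invariance_implies_directional_inequality (n m N p : ℕ)
    (A : Matrix (Fin n) (Fin n) ℝ) (B : Matrix (Fin n) (Fin m) ℝ)
    (K : Matrix (Fin m) (Fin n) ℝ) (Ltil : Matrix (Fin N) (Fin N) ℝ)
    (E : Matrix (Fin n) (Fin p) ℝ)
    (Q : Matrix (Fin p) (Fin p) ℝ) (hQ : Q.PosDef)
    (P : Matrix (Fin N × Fin n) (Fin N × Fin n) ℝ) (hP : P.PosDef)
    (M : Matrix (Fin N × Fin n) (Fin N × Fin n) ℝ)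
    (hM : M = (1 : Matrix (Fin N) (Fin N) ℝ) ⊗ₖ A - Ltil ⊗ₖ (B * K))
    (F : Matrix (Fin N × Fin n) (Fin p) ℝ)
    (hF : ∀ (ij : Fin N × Fin n) (k : Fin p), F ij k = E ij.2 k)
    (hinv : ∀ ω : ℝ → (Fin p → ℝ), (∀ t : ℝ, 0 ≤ t → ω t ⬝ᵥ (Q *ᵥ ω t) ≤ 1) →
      ∀ e : ℝ → (Fin N × Fin n → ℝ),
        (∀ t : ℝ, 0 ≤ t → HasDerivAt e (M *ᵥ e t + F *ᵥ ω t) t) →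
        e 0 ⬝ᵥ (P *ᵥ e 0) ≤ 1 →
        ∀ t : ℝ, 0 ≤ t → e t ⬝ᵥ (P *ᵥ e t) ≤ 1) :
    ∀ (x : Fin N × Fin n → ℝ) (w : Fin p → ℝ),
      w ⬝ᵥ (Q *ᵥ w) ≤ x ⬝ᵥ (P *ᵥ x) →
      x ⬝ᵥ ((P * M + Mᵀ * P) *ᵥ x) + 2 * (x ⬝ᵥ ((P * F) *ᵥ w)) ≤ 0 := by
  intro x w hle
  have hPsym : Pᵀ = P := by
    have := hP.1
    simpa [Matrix.IsHermitian] using this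
  by_cases hx : x = 0
  · -- degenerate case : x = 0 forces w = 0
    have hw : w = 0 := by
      by_contra hw
      have h1 : 0 < star w ⬝ᵥ (Q *ᵥ w) := hQ.dotProduct_mulVec_pos hw
      have h2 : star w = w := by simp
      rw [h2] at h1
      have h3 : x ⬝ᵥ (P *ᵥ x) = 0 := by simp [hx]
      linarith [hle, h3.le]
    subst hx; subst hw
    simp
  · have hs : 0 < x ⬝ᵥ (P *ᵥ x) := by
      have h1 := hP.dotProduct_mulVec_pos hx
      have h2 : star x = x := by simp
      rwa [h2] at h1
    set s : ℝ := x ⬝ᵥ (P *ᵥ x) with hsdef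
    set r : ℝ := Real.sqrt s with hrdef
    have hr : 0 < r := Real.sqrt_pos.2 hs
    have hrr : r * r = s := Real.mul_self_sqrt hs.le
    set xt : Fin N × Fin n → ℝ := r⁻¹ • x with hxt
    set wt : Fin p → ℝ := r⁻¹ • w with hwt
    obtain ⟨e, he0, hederiv⟩ := exists_global_solution M (F *ᵥ wt) xt
    have hxPxt : xt ⬝ᵥ (P *ᵥ xt) = 1 := by
      have h : xt ⬝ᵥ (P *ᵥ xt) = r⁻¹ * (r⁻¹ * s) := by
        rw [hxt, smul_dotProduct, Matrix.mulVec_smul, dotProduct_smul]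
        simp only [smul_eq_mul, ← hsdef]
      rw [h, ← hrr]
      field_simp
    have hwQwt : wt ⬝ᵥ (Q *ᵥ wt) ≤ 1 := by
      have h : wt ⬝ᵥ (Q *ᵥ wt) = (w ⬝ᵥ (Q *ᵥ w)) / (r * r) := by
        rw [hwt, smul_dotProduct, Matrix.mulVec_smul, dotProduct_smul]
        simp only [smul_eq_mul]
        field_simp
      rw [h, hrr]
      exact (div_le_one hs).2 hle
    have hV1 : ∀ t : ℝ, 0 ≤ t → e t ⬝ᵥ (P *ᵥ e t) ≤ 1 := by
      refine hinv (fun _ => wt) (fun t _ => hwQwt) e (fun t _ => hederiv t) ?_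
      rw [he0, hxPxt]
    have hd := hasDerivAt_quad P e (M *ᵥ e 0 + F *ᵥ wt) 0 (hederiv 0)
    rw [he0] at hd
    have hdle : (M *ᵥ xt + F *ᵥ wt) ⬝ᵥ (P *ᵥ xt) + xt ⬝ᵥ (P *ᵥ (M *ᵥ xt + F *ᵥ wt)) ≤ 0 := by
      refine deriv_nonpos_at_max hd ?_
      intro t ht
      rw [he0, hxPxt]
      exact hV1 t ht
    rw [quad_expand P M F hPsym xt wt] at hdle
    -- now rescale
    have key : x ⬝ᵥ ((P * M + Mᵀ * P) *ᵥ x) + 2 * (x ⬝ᵥ ((P * F) *ᵥ w))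
        = (r * r) * (xt ⬝ᵥ ((P * M + Mᵀ * P) *ᵥ xt) + 2 * (xt ⬝ᵥ ((P * F) *ᵥ wt))) := by
      rw [hxt, hwt, smul_dotProduct, Matrix.mulVec_smul, dotProduct_smul,
        smul_dotProduct, Matrix.mulVec_smul, dotProduct_smul]
      simp only [smul_eq_mul]
      field_simp
    rw [key]
    have h2 := mul_le_mul_of_nonneg_left hdle (mul_pos hr hr).le
    simpa using h2
end

section
/- Suppose β > 0 is such that the block matrix [[P M + M^⊤ P + β P, P F],[F^⊤ P, −β Q]] is negative semidefinite. Then for every disturbance ω and every solution e of the perturbed error system, the function V(t) = e(t)^⊤ P e(t) satisfies V(t) ≤ 1 + (V(0) − 1)·exp(−β t) for all t ≥ 0. In particular, for every ε > 0 there exists T ≥ 0 such that e(t)^⊤ P e(t) ≤ 1 + ε for all t ≥ T, so the ellipsoid ε(P) is attractive. -/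
open Matrix
open scoped Kronecker

private lemma quad_hasDerivAt' {ι : Type*} [Fintype ι] (P : Matrix ι ι ℝ)
    (e : ℝ → ι → ℝ) (v : ι → ℝ) (t : ℝ) (h : HasDerivAt e v t) :
    HasDerivAt (fun s => e s ⬝ᵥ (P *ᵥ e s)) (v ⬝ᵥ (P *ᵥ e t) + e t ⬝ᵥ (P *ᵥ v)) t := by
  have hc : ∀ i, HasDerivAt (fun s => e s i) (v i) t := fun i => (hasDerivAt_pi.mp h) i
  have key : HasDerivAt (fun s => ∑ i, ∑ j, e s i * (P i j * e s j))
      (∑ i, ∑ j, (v i * (P i j * e t j) + e t i * (P i j * v j))) t := by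
    apply HasDerivAt.fun_sum; intro i _
    apply HasDerivAt.fun_sum; intro j _
    exact (hc i).mul ((hc j).const_mul (P i j))
  convert key using 1
  · ext s; simp [dotProduct, mulVec, Finset.mul_sum]
  · simp [dotProduct, mulVec, Finset.mul_sum, Finset.sum_add_distrib]

private lemma dot_mulVec_comm' {ι κ : Type*} [Fintype ι] [Fintype κ]
    (A : Matrix ι κ ℝ) (x : ι → ℝ) (y : κ → ℝ) :
    x ⬝ᵥ (A *ᵥ y) = y ⬝ᵥ (Aᵀ *ᵥ x) := by
  rw [Matrix.dotProduct_mulVec, Matrix.mulVec_transpose, dotProduct_comm]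

private lemma blocks_dot {ι κ : Type*} [Fintype ι] [Fintype κ] (A₁ : Matrix ι ι ℝ)
    (B₁ : Matrix ι κ ℝ) (C₁ : Matrix κ ι ℝ) (D₁ : Matrix κ κ ℝ) (x : ι → ℝ) (w : κ → ℝ) :
    (Sum.elim x w) ⬝ᵥ ((fromBlocks A₁ B₁ C₁ D₁) *ᵥ Sum.elim x w) =
      x ⬝ᵥ (A₁ *ᵥ x) + x ⬝ᵥ (B₁ *ᵥ w) + w ⬝ᵥ (C₁ *ᵥ x) + w ⬝ᵥ (D₁ *ᵥ w) := by
  rw [fromBlocks_mulVec, sumElim_dotProduct_sumElim, dotProduct_add, dotProduct_add]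
  simp [Sum.elim_comp_inl, Sum.elim_comp_inr, add_assoc]

/-- If `β > 0` makes the block matrix
`[[P M + Mᵀ P + β P, P F], [Fᵀ P, -β Q]]` negative semidefinite, then along every
solution of the perturbed error system the function `V t = e tᵀ P (e t)` satisfies
`V t ≤ 1 + (V 0 - 1) exp (-β t)` for `t ≥ 0`; in particular `ε(P)` is attractive. -/
theorem lmi_implies_exponential_attractivity (n m N p : ℕ)
    (A : Matrix (Fin n) (Fin n) ℝ) (B : Matrix (Fin n) (Fin m) ℝ)
    (K : Matrix (Fin m) (Fin n) ℝ) (Ltil : Matrix (Fin N) (Fin N) ℝ)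
    (E : Matrix (Fin n) (Fin p) ℝ)
    (Q : Matrix (Fin p) (Fin p) ℝ) (hQ : Q.PosDef)
    (P : Matrix (Fin N × Fin n) (Fin N × Fin n) ℝ) (hP : P.PosDef)
    (M : Matrix (Fin N × Fin n) (Fin N × Fin n) ℝ)
    (hM : M = (1 : Matrix (Fin N) (Fin N) ℝ) ⊗ₖ A - Ltil ⊗ₖ (B * K))
    (F : Matrix (Fin N × Fin n) (Fin p) ℝ)
    (hF : ∀ (ij : Fin N × Fin n) (k : Fin p), F ij k = E ij.2 k)
    (β : ℝ) (hβ : 0 < β)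
    (hLMI : ∀ v : (Fin N × Fin n) ⊕ Fin p → ℝ,
      v ⬝ᵥ ((Matrix.fromBlocks (P * M + Mᵀ * P + β • P) (P * F) (Fᵀ * P) (-β • Q)) *ᵥ v) ≤ 0)
    (ω : ℝ → (Fin p → ℝ)) (hω : ∀ t : ℝ, 0 ≤ t → ω t ⬝ᵥ (Q *ᵥ ω t) ≤ 1)
    (e : ℝ → (Fin N × Fin n → ℝ))
    (he : ∀ t : ℝ, 0 ≤ t → HasDerivAt e (M *ᵥ e t + F *ᵥ ω t) t) :
    (∀ t : ℝ, 0 ≤ t →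
        e t ⬝ᵥ (P *ᵥ e t) ≤ 1 + (e 0 ⬝ᵥ (P *ᵥ e 0) - 1) * Real.exp (-β * t)) ∧
    (∀ ε : ℝ, 0 < ε → ∃ T : ℝ, 0 ≤ T ∧ ∀ t : ℝ, T ≤ t → e t ⬝ᵥ (P *ᵥ e t) ≤ 1 + ε) := by
  have hPsym : Pᵀ = P := by
    have := hP.isHermitian
    simpa [Matrix.IsHermitian] using this
  set V : ℝ → ℝ := fun s => e s ⬝ᵥ (P *ᵥ e s) with hV
  -- derivative of V
  have hVd : ∀ t : ℝ, 0 ≤ t → HasDerivAt V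
      ((M *ᵥ e t + F *ᵥ ω t) ⬝ᵥ (P *ᵥ e t) + e t ⬝ᵥ (P *ᵥ (M *ᵥ e t + F *ᵥ ω t))) t :=
    fun t ht => quad_hasDerivAt' P e _ t (he t ht)
  -- derivative bound
  have hbound : ∀ t : ℝ, 0 ≤ t →
      (M *ᵥ e t + F *ᵥ ω t) ⬝ᵥ (P *ᵥ e t) + e t ⬝ᵥ (P *ᵥ (M *ᵥ e t + F *ᵥ ω t))
        ≤ β - β * V t := by
    intro t ht
    set x := e t with hx
    set w := ω t with hw
    have h1 := hLMI (Sum.elim x w)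
    rw [blocks_dot] at h1
    have e1 : x ⬝ᵥ ((P * M + Mᵀ * P + β • P) *ᵥ x)
        = x ⬝ᵥ ((P * M) *ᵥ x) + x ⬝ᵥ ((Mᵀ * P) *ᵥ x) + β * (x ⬝ᵥ (P *ᵥ x)) := by
      simp [add_mulVec, smul_mulVec, dotProduct_add, dotProduct_smul, smul_eq_mul]
    have e2 : x ⬝ᵥ ((Mᵀ * P) *ᵥ x) = x ⬝ᵥ ((P * M) *ᵥ x) := by
      rw [dot_mulVec_comm' (Mᵀ * P), transpose_mul, transpose_transpose, hPsym]
    have e3 : w ⬝ᵥ ((Fᵀ * P) *ᵥ x) = x ⬝ᵥ ((P * F) *ᵥ w) := by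
      rw [dot_mulVec_comm' (Fᵀ * P), transpose_mul, transpose_transpose, hPsym]
    have e4 : w ⬝ᵥ ((-β • Q) *ᵥ w) = -β * (w ⬝ᵥ (Q *ᵥ w)) := by
      simp [neg_smul, neg_mulVec, dotProduct_neg, smul_mulVec, dotProduct_smul,
        smul_eq_mul]
    have e5 : (M *ᵥ x) ⬝ᵥ (P *ᵥ x) = x ⬝ᵥ ((P * M) *ᵥ x) := by
      rw [dot_mulVec_comm' P (M *ᵥ x) x, hPsym, mulVec_mulVec]
    have e6 : (F *ᵥ w) ⬝ᵥ (P *ᵥ x) = x ⬝ᵥ ((P * F) *ᵥ w) := by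
      rw [dot_mulVec_comm' P (F *ᵥ w) x, hPsym, mulVec_mulVec]
    have e7 : x ⬝ᵥ (P *ᵥ (M *ᵥ x)) = x ⬝ᵥ ((P * M) *ᵥ x) := by rw [mulVec_mulVec]
    have e8 : x ⬝ᵥ (P *ᵥ (F *ᵥ w)) = x ⬝ᵥ ((P * F) *ᵥ w) := by rw [mulVec_mulVec]
    have hwQ : w ⬝ᵥ (Q *ᵥ w) ≤ 1 := hω t ht
    have hVt : V t = x ⬝ᵥ (P *ᵥ x) := rfl
    rw [e1, e2, e3, e4] at h1
    rw [add_dotProduct, mulVec_add, dotProduct_add, e5, e6, e7, e8, hVt]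
    nlinarith [h1, hwQ, hβ, mul_le_mul_of_nonneg_left hwQ hβ.le]
  -- the auxiliary function g
  set g : ℝ → ℝ := fun s => (V s - 1) * Real.exp (β * s) with hg
  have hgd : ∀ t : ℝ, 0 ≤ t → HasDerivAt g
      (((M *ᵥ e t + F *ᵥ ω t) ⬝ᵥ (P *ᵥ e t) + e t ⬝ᵥ (P *ᵥ (M *ᵥ e t + F *ᵥ ω t)))
          * Real.exp (β * t) + (V t - 1) * (Real.exp (β * t) * β)) t := by
    intro t ht
    have hexp : HasDerivAt (fun s => Real.exp (β * s)) (Real.exp (β * t) * β) t := by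
      simpa using ((hasDerivAt_id t).const_mul β).exp
    exact ((hVd t ht).sub_const 1).mul hexp
  have hgd_nonpos : ∀ t : ℝ, 0 ≤ t →
      ((M *ᵥ e t + F *ᵥ ω t) ⬝ᵥ (P *ᵥ e t) + e t ⬝ᵥ (P *ᵥ (M *ᵥ e t + F *ᵥ ω t)))
          * Real.exp (β * t) + (V t - 1) * (Real.exp (β * t) * β) ≤ 0 := by
    intro t ht
    have h1 := hbound t ht
    have h2 : (0:ℝ) < Real.exp (β * t) := Real.exp_pos _
    nlinarith [h1, h2]
  have hg_anti : AntitoneOn g (Set.Ici (0:ℝ)) := by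
    apply antitoneOn_of_deriv_nonpos (convex_Ici 0)
    · intro t ht
      exact (hgd t ht).continuousAt.continuousWithinAt
    · rw [interior_Ici]
      intro t ht
      exact (hgd t (le_of_lt ht)).differentiableAt.differentiableWithinAt
    · rw [interior_Ici]
      intro t ht
      rw [(hgd t ht.le).deriv]
      exact hgd_nonpos t ht.le
  have part1 : ∀ t : ℝ, 0 ≤ t → V t ≤ 1 + (V 0 - 1) * Real.exp (-β * t) := by
    intro t ht
    have hgle : g t ≤ g 0 := hg_anti (Set.self_mem_Ici) ht ht
    have hg0 : g 0 = V 0 - 1 := by simp [hg]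
    have hmul : Real.exp (β * t) * Real.exp (-β * t) = 1 := by
      rw [← Real.exp_add, show β * t + -β * t = 0 by ring, Real.exp_zero]
    have h2 : (0:ℝ) < Real.exp (-β * t) := Real.exp_pos _
    have hgt : g t = (V t - 1) * Real.exp (β * t) := rfl
    have h5 : (V t - 1) * Real.exp (β * t) * Real.exp (-β * t)
        ≤ (V 0 - 1) * Real.exp (-β * t) := by
      rw [← hgt, ← hg0]
      exact mul_le_mul_of_nonneg_right hgle h2.le
    have h6 : (V t - 1) * Real.exp (β * t) * Real.exp (-β * t) = V t - 1 := by
      rw [mul_assoc, hmul, mul_one]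
    linarith
  refine ⟨part1, ?_⟩
  intro ε hε
  by_cases h0 : V 0 - 1 ≤ 0
  · refine ⟨0, le_refl 0, fun t ht => ?_⟩
    have h1 := part1 t ht
    have h2 : (0:ℝ) < Real.exp (-β * t) := Real.exp_pos _
    nlinarith
  · push_neg at h0
    set c := V 0 - 1 with hc
    refine ⟨max 0 (Real.log (c / ε) / β), le_max_left _ _, fun t ht => ?_⟩
    have ht0 : 0 ≤ t := le_trans (le_max_left _ _) ht
    have htlog : Real.log (c / ε) / β ≤ t := le_trans (le_max_right _ _) ht
    have hβt : Real.log (c / ε) ≤ β * t := by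
      rw [div_le_iff₀ hβ] at htlog; linarith [htlog]
    have hcε : (0:ℝ) < c / ε := div_pos h0 hε
    have hexp : Real.exp (-β * t) ≤ ε / c := by
      have h1 : Real.exp (-β * t) ≤ Real.exp (-Real.log (c / ε)) := by
        apply Real.exp_le_exp.mpr; linarith
      have h2 : Real.exp (-Real.log (c / ε)) = ε / c := by
        rw [Real.exp_neg, Real.exp_log hcε, inv_div]
      linarith [h1, h2 ▸ h1]
    have h1 := part1 t ht0
    have h3 : c * Real.exp (-β * t) ≤ c * (ε / c) := by
      apply mul_le_mul_of_nonneg_left hexp h0.le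
    have h4 : c * (ε / c) = ε := by field_simp
    have h5 : c * Real.exp (-β * t) ≤ ε := h4 ▸ h3
    calc V t ≤ 1 + c * Real.exp (-β * t) := h1
      _ ≤ 1 + ε := by linarith [h5]
end

section
/- Suppose E ≠ 0, the ellipsoid ε(P) is invariant for the perturbed error system, and there exists a symmetric positive definite matrix P' with P' M + M^⊤ P' negative semidefinite (i.e., the gain K achieves leader-following consensus in the absence of disturbances). Then ε(P) is attractive: for every disturbance ω, every solution e of the perturbed error system, and every ε > 0, there exists T ≥ 0 such that e(t)^⊤ P e(t) ≤ 1 + ε for all t ≥ T. -/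
open Matrix
open scoped Kronecker

set_option linter.unusedSectionVars false
set_option linter.unusedVariables false
set_option maxHeartbeats 1000000
section AuxiliaryLemmas
open NormedSpace

open Matrix NormedSpace

attribute [local instance] Matrix.linftyOpNormedAddCommGroup Matrix.linftyOpNormedRing
  Matrix.linftyOpNormedAlgebra

variable {ι : Type*} [Fintype ι] [DecidableEq ι]

/-- right mulVec as a linear map in the matrix argument -/
noncomputable def mulVecRightCLM (v : ι → ℝ) : Matrix ι ι ℝ →L[ℝ] (ι → ℝ) :=
  LinearMap.toContinuousLinearMap
    { toFun := fun A => A *ᵥ v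
      map_add' := fun A B => Matrix.add_mulVec A B v
      map_smul' := fun c A => by simp [Matrix.smul_mulVec] }

@[simp] lemma mulVecRightCLM_apply (v : ι → ℝ) (A : Matrix ι ι ℝ) :
    mulVecRightCLM v A = A *ᵥ v := rfl

lemma exists_const_input_solution (M : Matrix ι ι ℝ) (c x₀ : ι → ℝ) :
    ∃ sol : ℝ → ι → ℝ, sol 0 = x₀ ∧
      ∀ t : ℝ, HasDerivAt sol (M *ᵥ sol t + c) t := by
  classical
  set φ : ℝ → Matrix ι ι ℝ := fun t => exp (t • M) with hφdef
  have hφ : ∀ t : ℝ, HasDerivAt φ (M * φ t) t := by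
    intro t
    exact (hasDerivAt_exp_smul_const' (𝕂 := ℝ) M t)
  have hφc : ∀ v : ι → ℝ, ∀ t : ℝ,
      HasDerivAt (fun t => φ t *ᵥ v) ((M * φ t) *ᵥ v) t := by
    intro v t
    exact ((mulVecRightCLM v).hasFDerivAt.comp_hasDerivAt t (hφ t))
  have hcont : Continuous fun t => φ t *ᵥ c := by
    refine continuous_iff_continuousAt.2 fun t => (hφc c t).continuousAt
  set ψ : ℝ → ι → ℝ := fun t => ∫ s in (0:ℝ)..t, φ s *ᵥ c with hψdef
  have hψ : ∀ t : ℝ, HasDerivAt ψ (φ t *ᵥ c) t := fun t =>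
    (hcont.integral_hasStrictDerivAt 0 t).hasDerivAt
  -- key identity: φ t *ᵥ c = M *ᵥ ψ t + c
  have key : ∀ t : ℝ, φ t *ᵥ c = M *ᵥ ψ t + c := by
    have hχ : ∀ t : ℝ, HasDerivAt (fun t => φ t *ᵥ c - M *ᵥ ψ t) 0 t := by
      intro t
      have h2 : HasDerivAt (fun t => M *ᵥ ψ t) (M *ᵥ (φ t *ᵥ c)) t := by
        exact ((M.mulVecLin.toContinuousLinearMap).hasFDerivAt.comp_hasDerivAt t (hψ t))
      have := (hφc c t).sub h2
      simp [Matrix.mulVec_mulVec] at this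
      exact this
    have hconst : ∀ t : ℝ, (fun t => φ t *ᵥ c - M *ᵥ ψ t) t
        = (fun t => φ t *ᵥ c - M *ᵥ ψ t) 0 := by
      intro t
      exact is_const_of_deriv_eq_zero (fun s => (hχ s).differentiableAt)
        (fun s => (hχ s).deriv) t 0
    intro t
    have h0 : ψ 0 = 0 := by simp [hψdef]
    have h1 : φ 0 = 1 := by simp [hφdef, exp_zero]
    have := hconst t
    simp only [h0, h1, Matrix.mulVec_zero, Matrix.one_mulVec, sub_zero] at this
    rw [sub_eq_iff_eq_add] at this; rw [this]; abel
  refine ⟨fun t => φ t *ᵥ x₀ + ψ t, by simp [hφdef, hψdef, exp_zero, Matrix.one_mulVec], fun t => ?_⟩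
  have := ((hφc x₀ t).add (hψ t))
  have heq : (M * φ t) *ᵥ x₀ + φ t *ᵥ c
      = M *ᵥ (φ t *ᵥ x₀ + ψ t) + c := by
    rw [key t, Matrix.mulVec_add, Matrix.mulVec_mulVec]
    abel
  rw [heq] at this
  exact this

open Matrix

variable {ι : Type*} [Fintype ι]

lemma hasDerivAt_quadform (P : Matrix ι ι ℝ) {x : ℝ → ι → ℝ} {x' : ι → ℝ} {t : ℝ}
    (hx : HasDerivAt x x' t) :
    HasDerivAt (fun t => x t ⬝ᵥ (P *ᵥ x t))
      (x' ⬝ᵥ (P *ᵥ x t) + x t ⬝ᵥ (P *ᵥ x')) t := by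
  have hcoord : ∀ i, HasDerivAt (fun s => x s i) (x' i) t := by
    intro i
    simpa [Function.comp_def] using ((ContinuousLinearMap.proj i : (ι → ℝ) →L[ℝ] ℝ).hasFDerivAt.comp_hasDerivAt t hx)
  have hPcoord : ∀ i, HasDerivAt (fun s => (P *ᵥ x s) i) ((P *ᵥ x') i) t := by
    intro i
    simp only [Matrix.mulVec, dotProduct]
    exact HasDerivAt.fun_sum fun j _ => (hcoord j).const_mul (P i j)
  simp only [dotProduct]
  refine HasDerivAt.congr_deriv (HasDerivAt.fun_sum (fun i _ => (hcoord i).mul (hPcoord i))) ?_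
  rw [← Finset.sum_add_distrib]

lemma deriv_nonpos_of_le_init {f : ℝ → ℝ} {d : ℝ} (hf : HasDerivAt f d 0)
    (hle : ∀ t : ℝ, 0 ≤ t → f t ≤ f 0) : d ≤ 0 := by
  have h : HasDerivWithinAt f d (Set.Ioi 0) 0 := hf.hasDerivWithinAt
  rw [hasDerivWithinAt_iff_tendsto_slope] at h
  have hsub : Set.Ioi (0:ℝ) \ {0} = Set.Ioi 0 :=
    Set.diff_singleton_eq_self (by simp)
  rw [hsub] at h
  refine le_of_tendsto h ?_
  filter_upwards [self_mem_nhdsWithin] with y hy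
  have hy' : (0:ℝ) < y := hy
  have : f y - f 0 ≤ 0 := sub_nonpos.2 (hle y hy'.le)
  rw [slope_def_field]
  simp only [sub_zero]
  exact div_nonpos_of_nonpos_of_nonneg this hy'.le

lemma continuous_quadform (R : Matrix ι ι ℝ) :
    Continuous fun x : ι → ℝ => x ⬝ᵥ (R *ᵥ x) := by
  simp only [dotProduct, Matrix.mulVec]
  exact continuous_finset_sum _ fun i _ =>
    (continuous_apply i).mul (continuous_finset_sum _ fun j _ =>
      continuous_const.mul (continuous_apply j))

lemma quadform_smul (R : Matrix ι ι ℝ) (c : ℝ) (v : ι → ℝ) :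
    (c • v) ⬝ᵥ (R *ᵥ (c • v)) = c ^ 2 * (v ⬝ᵥ (R *ᵥ v)) := by
  rw [Matrix.mulVec_smul, smul_dotProduct, dotProduct_smul]
  simp [smul_eq_mul]; ring

open Matrix

variable {ι κ : Type*} [Fintype ι] [DecidableEq ι] [Fintype κ] [DecidableEq κ]

lemma posdef_dot {P : Matrix ι ι ℝ} (hP : P.PosDef) {x : ι → ℝ} (hx : x ≠ 0) :
    0 < x ⬝ᵥ (P *ᵥ x) := by
  have := hP.dotProduct_mulVec_pos hx
  rwa [star_trivial] at this

lemma posdef_dot_nonneg {P : Matrix ι ι ℝ} (hP : P.PosDef) (x : ι → ℝ) :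
    0 ≤ x ⬝ᵥ (P *ᵥ x) := by
  rcases eq_or_ne x 0 with h | h
  · simp [h]
  · exact (posdef_dot hP h).le

lemma quad_expand_s11 (P : Matrix ι ι ℝ) (x y : ι → ℝ) (t : ℝ) :
    (x + t • y) ⬝ᵥ (P *ᵥ (x + t • y)) =
      x ⬝ᵥ (P *ᵥ x) + t * (x ⬝ᵥ (P *ᵥ y) + y ⬝ᵥ (P *ᵥ x)) + t ^ 2 * (y ⬝ᵥ (P *ᵥ y)) := by
  simp only [Matrix.mulVec_add, Matrix.mulVec_smul, dotProduct_add,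
    add_dotProduct, dotProduct_smul, smul_dotProduct, smul_eq_mul]
  ring

/-- homogenized boundary condition -/
lemma hom_dagger {P M : Matrix ι ι ℝ} {F : Matrix ι κ ℝ} {Q : Matrix κ κ ℝ}
    (hP : P.PosDef)
    (hd : ∀ x : ι → ℝ, x ⬝ᵥ (P *ᵥ x) = 1 → ∀ ν : κ → ℝ, ν ⬝ᵥ (Q *ᵥ ν) ≤ 1 →
      x ⬝ᵥ (P *ᵥ (M *ᵥ x)) + x ⬝ᵥ (P *ᵥ (F *ᵥ ν)) ≤ 0) :
    ∀ x : ι → ℝ, ∀ ν : κ → ℝ, ν ⬝ᵥ (Q *ᵥ ν) ≤ 1 →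
      x ⬝ᵥ (P *ᵥ (M *ᵥ x)) + Real.sqrt (x ⬝ᵥ (P *ᵥ x)) * (x ⬝ᵥ (P *ᵥ (F *ᵥ ν))) ≤ 0 := by
  intro x ν hν
  rcases eq_or_ne x 0 with rfl | hx
  · simp
  · have hq : 0 < x ⬝ᵥ (P *ᵥ x) := posdef_dot hP hx
    set s : ℝ := Real.sqrt (x ⬝ᵥ (P *ᵥ x)) with hs
    have hs0 : 0 < s := Real.sqrt_pos.2 hq
    have hs2 : s ^ 2 = x ⬝ᵥ (P *ᵥ x) := Real.sq_sqrt hq.le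
    have hunit : (s⁻¹ • x) ⬝ᵥ (P *ᵥ (s⁻¹ • x)) = 1 := by
      rw [quadform_smul, ← hs2]
      field_simp
    have := hd (s⁻¹ • x) hunit ν hν
    have hexp1 : (s⁻¹ • x) ⬝ᵥ (P *ᵥ (M *ᵥ (s⁻¹ • x))) = s⁻¹ ^ 2 * (x ⬝ᵥ (P *ᵥ (M *ᵥ x))) := by
      simp only [Matrix.mulVec_smul, smul_dotProduct, dotProduct_smul, smul_eq_mul]
      ring
    have hexp2 : (s⁻¹ • x) ⬝ᵥ (P *ᵥ (F *ᵥ ν)) = s⁻¹ * (x ⬝ᵥ (P *ᵥ (F *ᵥ ν))) := by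
      simp only [smul_dotProduct, smul_eq_mul]
    rw [hexp1, hexp2] at this
    have h2 : s ^ 2 * (s⁻¹ ^ 2 * (x ⬝ᵥ (P *ᵥ (M *ᵥ x))) + s⁻¹ * (x ⬝ᵥ (P *ᵥ (F *ᵥ ν)))) ≤ 0 :=
      mul_nonpos_of_nonneg_of_nonpos (sq_nonneg s) this
    have hss : s ≠ 0 := ne_of_gt hs0
    calc x ⬝ᵥ (P *ᵥ (M *ᵥ x)) + s * (x ⬝ᵥ (P *ᵥ (F *ᵥ ν)))
        = s ^ 2 * (s⁻¹ ^ 2 * (x ⬝ᵥ (P *ᵥ (M *ᵥ x))) + s⁻¹ * (x ⬝ᵥ (P *ᵥ (F *ᵥ ν)))) := by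
          field_simp
      _ ≤ 0 := h2
/-- scaling an arbitrary vector into the admissible set -/
lemma admissible_scale {Q : Matrix κ κ ℝ} (hQ0 : ∀ ν : κ → ℝ, 0 ≤ ν ⬝ᵥ (Q *ᵥ ν))
    (ν : κ → ℝ) : ∃ c : ℝ, 0 < c ∧ (c • ν) ⬝ᵥ (Q *ᵥ (c • ν)) ≤ 1 := by
  set a : ℝ := ν ⬝ᵥ (Q *ᵥ ν) with ha
  have ha0 : 0 ≤ a := hQ0 ν
  refine ⟨(Real.sqrt a + 1)⁻¹, by positivity, ?_⟩
  rw [quadform_smul, ← ha]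
  have h1 : Real.sqrt a ^ 2 = a := Real.sq_sqrt ha0
  have h2 : 0 ≤ Real.sqrt a := Real.sqrt_nonneg a
  have hc0 : (0:ℝ) ≤ (Real.sqrt a + 1)⁻¹ := by positivity
  have hc1 : (Real.sqrt a + 1)⁻¹ ≤ 1 := by
    rw [inv_le_one_iff₀]; right; linarith
  have hca : (Real.sqrt a + 1)⁻¹ * Real.sqrt a = 1 - (Real.sqrt a + 1)⁻¹ := by
    have h3 : (Real.sqrt a + 1)⁻¹ * (Real.sqrt a + 1) = 1 := inv_mul_cancel₀ (by positivity)
    linarith [h3]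
  have hkey : ((Real.sqrt a + 1)⁻¹) ^ 2 * a = (1 - (Real.sqrt a + 1)⁻¹) ^ 2 := by
    have h4 : ((Real.sqrt a + 1)⁻¹) ^ 2 * Real.sqrt a ^ 2
        = ((Real.sqrt a + 1)⁻¹ * Real.sqrt a) ^ 2 := by ring
    nth_rewrite 2 [← h1]
    rw [h4, hca]
  rw [hkey]
  nlinarith

lemma strict_neg {P M : Matrix ι ι ℝ} {F : Matrix ι κ ℝ} {Q : Matrix κ κ ℝ}
    (hP : P.PosDef) (hQ0 : ∀ ν : κ → ℝ, 0 ≤ ν ⬝ᵥ (Q *ᵥ ν)) (hFne : F ≠ 0)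
    (hd : ∀ x : ι → ℝ, ∀ ν : κ → ℝ, ν ⬝ᵥ (Q *ᵥ ν) ≤ 1 →
      x ⬝ᵥ (P *ᵥ (M *ᵥ x)) + Real.sqrt (x ⬝ᵥ (P *ᵥ x)) * (x ⬝ᵥ (P *ᵥ (F *ᵥ ν))) ≤ 0) :
    ∀ x : ι → ℝ, x ≠ 0 → x ⬝ᵥ (P *ᵥ (M *ᵥ x)) < 0 := by
  intro x hx
  by_contra hcon
  push_neg at hcon
  set s : ℝ := Real.sqrt (x ⬝ᵥ (P *ᵥ x)) with hs
  have hs0 : 0 < s := Real.sqrt_pos.2 (posdef_dot hP hx)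
  -- the F-term vanishes against x, for admissible ν
  have hzero₁ : ∀ ν : κ → ℝ, ν ⬝ᵥ (Q *ᵥ ν) ≤ 1 → x ⬝ᵥ (P *ᵥ (F *ᵥ ν)) = 0 := by
    intro ν hν
    have hνneg : (-ν) ⬝ᵥ (Q *ᵥ (-ν)) ≤ 1 := by
      rwa [Matrix.mulVec_neg, dotProduct_neg, neg_dotProduct, neg_neg]
    have h1 := hd x ν hν
    have h2 := hd x (-ν) hνneg
    simp only [Matrix.mulVec_neg, dotProduct_neg] at h2
    nlinarith
  -- q x = 0
  have hq0 : x ⬝ᵥ (P *ᵥ (M *ᵥ x)) = 0 := by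
    have h1 := hd x 0 (by simp [hQ0 0, Matrix.mulVec_zero])
    simp only [Matrix.mulVec_zero, dotProduct_zero, mul_zero, add_zero] at h1
    linarith
  -- the F-term vanishes against x, for every ν
  have hzero : ∀ ν : κ → ℝ, x ⬝ᵥ (P *ᵥ (F *ᵥ ν)) = 0 := by
    intro ν
    obtain ⟨c, hc, hcν⟩ := admissible_scale hQ0 ν
    have := hzero₁ (c • ν) hcν
    rw [Matrix.mulVec_smul, Matrix.mulVec_smul, dotProduct_smul, smul_eq_mul] at this
    exact (mul_eq_zero.1 this).resolve_left (ne_of_gt hc)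
  -- perturbation: for every y and admissible ν, b y = 0 and y-F-term = 0
  have hperturb : ∀ y : ι → ℝ, ∀ ν : κ → ℝ, ν ⬝ᵥ (Q *ᵥ ν) ≤ 1 →
      (x ⬝ᵥ (P *ᵥ (M *ᵥ y)) + y ⬝ᵥ (P *ᵥ (M *ᵥ x))) + s * (y ⬝ᵥ (P *ᵥ (F *ᵥ ν))) = 0 := by
    intro y ν hν
    set g : ℝ → ℝ := fun t =>
      (x ⬝ᵥ (P *ᵥ (M *ᵥ y)) + y ⬝ᵥ (P *ᵥ (M *ᵥ x))) + t * (y ⬝ᵥ (P *ᵥ (M *ᵥ y)))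
        + Real.sqrt ((x + t • y) ⬝ᵥ (P *ᵥ (x + t • y))) * (y ⬝ᵥ (P *ᵥ (F *ᵥ ν))) with hg
    have hkey : ∀ t : ℝ, t * g t ≤ 0 := by
      intro t
      have h1 := hd (x + t • y) ν hν
      have hexpM : (x + t • y) ⬝ᵥ (P *ᵥ (M *ᵥ (x + t • y)))
          = t * ((x ⬝ᵥ (P *ᵥ (M *ᵥ y)) + y ⬝ᵥ (P *ᵥ (M *ᵥ x))) + t * (y ⬝ᵥ (P *ᵥ (M *ᵥ y)))) := by
        simp only [Matrix.mulVec_add, Matrix.mulVec_smul, dotProduct_add,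
          add_dotProduct, dotProduct_smul, smul_dotProduct, smul_eq_mul]
        rw [show x ⬝ᵥ (P *ᵥ (M *ᵥ x)) = 0 from hq0]
        ring
      have hexpF : (x + t • y) ⬝ᵥ (P *ᵥ (F *ᵥ ν)) = t * (y ⬝ᵥ (P *ᵥ (F *ᵥ ν))) := by
        simp only [add_dotProduct, smul_dotProduct, smul_eq_mul, hzero ν]
        ring
      rw [hexpM, hexpF] at h1
      calc t * g t = t * ((x ⬝ᵥ (P *ᵥ (M *ᵥ y)) + y ⬝ᵥ (P *ᵥ (M *ᵥ x)))
              + t * (y ⬝ᵥ (P *ᵥ (M *ᵥ y))))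
            + Real.sqrt ((x + t • y) ⬝ᵥ (P *ᵥ (x + t • y))) * (t * (y ⬝ᵥ (P *ᵥ (F *ᵥ ν)))) := by
            rw [hg]; ring
        _ ≤ 0 := h1
    have hgcont : Continuous g := by
      apply Continuous.add
      · apply Continuous.add continuous_const
        exact continuous_id.mul continuous_const
      · apply Continuous.mul _ continuous_const
        apply Real.continuous_sqrt.comp
        exact (continuous_quadform P).comp (continuous_const.add (continuous_id.smul continuous_const))
    have hg0 : g 0 = (x ⬝ᵥ (P *ᵥ (M *ᵥ y)) + y ⬝ᵥ (P *ᵥ (M *ᵥ x)))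
        + s * (y ⬝ᵥ (P *ᵥ (F *ᵥ ν))) := by
      simp [hg, hs]
    have htendsto : Filter.Tendsto g (nhds 0) (nhds (g 0)) := hgcont.continuousAt
    have hle : g 0 ≤ 0 := by
      refine le_of_tendsto (htendsto.mono_left nhdsWithin_le_nhds : Filter.Tendsto g (nhdsWithin 0 (Set.Ioi 0)) _) ?_
      filter_upwards [self_mem_nhdsWithin] with t ht
      have ht' : (0:ℝ) < t := ht
      nlinarith [hkey t]
    have hge : 0 ≤ g 0 := by
      refine ge_of_tendsto (htendsto.mono_left nhdsWithin_le_nhds : Filter.Tendsto g (nhdsWithin 0 (Set.Iio 0)) _) ?_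
      filter_upwards [self_mem_nhdsWithin] with t ht
      have ht' : t < (0:ℝ) := ht
      nlinarith [hkey t]
    rw [← hg0]
    linarith
  -- b y = 0 for all y
  have hb : ∀ y : ι → ℝ, x ⬝ᵥ (P *ᵥ (M *ᵥ y)) + y ⬝ᵥ (P *ᵥ (M *ᵥ x)) = 0 := by
    intro y
    have := hperturb y 0 (by simp [hQ0 0, Matrix.mulVec_zero])
    simpa [Matrix.mulVec_zero, dotProduct_zero] using this
  -- y-F-term = 0 for all y, all ν
  have hFzero : ∀ y : ι → ℝ, ∀ ν : κ → ℝ, y ⬝ᵥ (P *ᵥ (F *ᵥ ν)) = 0 := by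
    intro y ν
    obtain ⟨c, hc, hcν⟩ := admissible_scale hQ0 ν
    have h1 := hperturb y (c • ν) hcν
    rw [hb y] at h1
    rw [Matrix.mulVec_smul, Matrix.mulVec_smul, dotProduct_smul, smul_eq_mul] at h1
    simp only [zero_add] at h1
    have : y ⬝ᵥ (P *ᵥ (F *ᵥ (ν))) * (s * c) = 0 := by linarith [h1]
    have hsc : s * c ≠ 0 := by positivity
    exact (mul_eq_zero.1 this).resolve_right hsc
  -- hence F = 0
  apply hFne
  have hPF : ∀ ν : κ → ℝ, F *ᵥ ν = 0 := by
    intro ν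
    have h1 : P *ᵥ (F *ᵥ ν) = 0 := by
      have := hFzero (P *ᵥ (F *ᵥ ν)) ν
      exact dotProduct_self_eq_zero.1 this
    by_contra h2
    have := posdef_dot hP h2
    rw [h1] at this
    simp at this
  ext i k
  have := congrFun (hPF (Pi.single k 1)) i
  simpa using this
lemma exists_gap [Nonempty ι] (P R : Matrix ι ι ℝ) (hP : P.PosDef)
    (hneg : ∀ x : ι → ℝ, x ≠ 0 → x ⬝ᵥ (R *ᵥ x) < 0) :
    ∃ lam : ℝ, 0 < lam ∧ ∀ x : ι → ℝ, x ⬝ᵥ (R *ᵥ x) ≤ -lam * (x ⬝ᵥ (P *ᵥ x)) := by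
  classical
  obtain ⟨i₀⟩ := ‹Nonempty ι›
  set y : ι → ℝ := Pi.single i₀ 1 with hy
  have hyne : y ≠ 0 := by
    intro h
    have := congrFun h i₀
    simp [hy] at this
  have hynorm : ‖y‖ ≠ 0 := norm_ne_zero_iff.2 hyne
  set x₁ : ι → ℝ := ‖y‖⁻¹ • y with hx₁
  have hx₁norm : ‖x₁‖ = 1 := by
    rw [hx₁, norm_smul, norm_inv, norm_norm, inv_mul_cancel₀ hynorm]
  have hsphere : x₁ ∈ Metric.sphere (0 : ι → ℝ) 1 := by
    simpa [Metric.mem_sphere, dist_eq_norm] using hx₁norm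
  have hcomp : IsCompact (Metric.sphere (0 : ι → ℝ) 1) := isCompact_sphere 0 1
  have hne : (Metric.sphere (0 : ι → ℝ) 1).Nonempty := ⟨x₁, hsphere⟩
  obtain ⟨x₀, hx₀mem, hx₀max⟩ := hcomp.exists_isMaxOn hne (continuous_quadform R).continuousOn
  obtain ⟨x₂, hx₂mem, hx₂max⟩ := hcomp.exists_isMaxOn hne (continuous_quadform P).continuousOn
  have hnorm_ne : ∀ z : ι → ℝ, z ∈ Metric.sphere (0 : ι → ℝ) 1 → z ≠ 0 := by
    intro z hz h0
    rw [Metric.mem_sphere, dist_eq_norm, sub_zero, h0] at hz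
    simp at hz
  set μ : ℝ := -(x₀ ⬝ᵥ (R *ᵥ x₀)) with hμ
  have hμpos : 0 < μ := by
    have := hneg x₀ (hnorm_ne x₀ hx₀mem)
    linarith
  set C : ℝ := x₂ ⬝ᵥ (P *ᵥ x₂) with hC
  have hCpos : 0 < C := posdef_dot hP (hnorm_ne x₂ hx₂mem)
  refine ⟨μ / C, div_pos hμpos hCpos, ?_⟩
  intro x
  rcases eq_or_ne x 0 with rfl | hx
  · simp
  have hxnorm : ‖x‖ ≠ 0 := norm_ne_zero_iff.2 hx
  set u : ι → ℝ := ‖x‖⁻¹ • x with hu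
  have humem : u ∈ Metric.sphere (0 : ι → ℝ) 1 := by
    rw [Metric.mem_sphere, dist_eq_norm, sub_zero, hu, norm_smul, norm_inv, norm_norm,
      inv_mul_cancel₀ hxnorm]
  have hxu : x = ‖x‖ • u := by
    rw [hu, smul_smul, mul_inv_cancel₀ hxnorm, one_smul]
  have hRu : u ⬝ᵥ (R *ᵥ u) ≤ -μ := by
    have := hx₀max humem
    simpa [hμ] using this
  have hPu : u ⬝ᵥ (P *ᵥ u) ≤ C := hx₂max humem
  have hkey : u ⬝ᵥ (R *ᵥ u) ≤ -(μ / C) * (u ⬝ᵥ (P *ᵥ u)) := by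
    have h1 : (μ / C) * (u ⬝ᵥ (P *ᵥ u)) ≤ (μ / C) * C :=
      mul_le_mul_of_nonneg_left hPu (le_of_lt (div_pos hμpos hCpos))
    rw [div_mul_cancel₀ _ (ne_of_gt hCpos)] at h1
    linarith
  have hgen : ∀ S : Matrix ι ι ℝ, x ⬝ᵥ (S *ᵥ x) = ‖x‖ ^ 2 * (u ⬝ᵥ (S *ᵥ u)) := by
    intro S
    conv_lhs => rw [hxu]
    rw [quadform_smul]
  calc x ⬝ᵥ (R *ᵥ x) = ‖x‖ ^ 2 * (u ⬝ᵥ (R *ᵥ u)) := hgen R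
    _ ≤ ‖x‖ ^ 2 * (-(μ / C) * (u ⬝ᵥ (P *ᵥ u))) :=
        mul_le_mul_of_nonneg_left hkey (sq_nonneg _)
    _ = -(μ / C) * (‖x‖ ^ 2 * (u ⬝ᵥ (P *ᵥ u))) := by ring
    _ = -(μ / C) * (x ⬝ᵥ (P *ᵥ x)) := by rw [hgen P]
lemma transpose_eq_of_posdef {P : Matrix ι ι ℝ} (hP : P.PosDef) : Pᵀ = P := by
  ext i j
  have h := congrFun (congrFun hP.1 i) j
  simpa [Matrix.conjTranspose_apply] using h

lemma dot_symm {P : Matrix ι ι ℝ} (hsym : Pᵀ = P) (x y : ι → ℝ) :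
    x ⬝ᵥ (P *ᵥ y) = y ⬝ᵥ (P *ᵥ x) := by
  have h1 : x ᵥ* P = P *ᵥ x := by
    conv_rhs => rw [← hsym]
    exact (Matrix.mulVec_transpose P x).symm
  rw [Matrix.dotProduct_mulVec, h1, dotProduct_comm]


end AuxiliaryLemmas

/-- **Corollary 1.** If `E ≠ 0`, the ellipsoid `ε(P)` is invariant for
the perturbed error system, and there is a symmetric positive definite `P'` with
`P' M + Mᵀ P'` negative semidefinite (leader-following consensus without
disturbances), then `ε(P)` is attractive. -/
theorem invariant_ellipsoid_is_attractive (n m N p : ℕ)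
    (A : Matrix (Fin n) (Fin n) ℝ) (B : Matrix (Fin n) (Fin m) ℝ)
    (K : Matrix (Fin m) (Fin n) ℝ) (Ltil : Matrix (Fin N) (Fin N) ℝ)
    (E : Matrix (Fin n) (Fin p) ℝ) (hE : E ≠ 0)
    (Q : Matrix (Fin p) (Fin p) ℝ) (hQ : Q.PosDef)
    (P : Matrix (Fin N × Fin n) (Fin N × Fin n) ℝ) (hP : P.PosDef)
    (M : Matrix (Fin N × Fin n) (Fin N × Fin n) ℝ)
    (hM : M = (1 : Matrix (Fin N) (Fin N) ℝ) ⊗ₖ A - Ltil ⊗ₖ (B * K))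
    (F : Matrix (Fin N × Fin n) (Fin p) ℝ)
    (hF : ∀ (ij : Fin N × Fin n) (k : Fin p), F ij k = E ij.2 k)
    (hinv : ∀ ω : ℝ → (Fin p → ℝ), (∀ t : ℝ, 0 ≤ t → ω t ⬝ᵥ (Q *ᵥ ω t) ≤ 1) →
      ∀ e : ℝ → (Fin N × Fin n → ℝ),
        (∀ t : ℝ, 0 ≤ t → HasDerivAt e (M *ᵥ e t + F *ᵥ ω t) t) →
        e 0 ⬝ᵥ (P *ᵥ e 0) ≤ 1 →
        ∀ t : ℝ, 0 ≤ t → e t ⬝ᵥ (P *ᵥ e t) ≤ 1)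
    (hcons : ∃ P' : Matrix (Fin N × Fin n) (Fin N × Fin n) ℝ, P'.PosDef ∧
      ∀ x : Fin N × Fin n → ℝ, x ⬝ᵥ ((P' * M + Mᵀ * P') *ᵥ x) ≤ 0) :
    ∀ ω : ℝ → (Fin p → ℝ), (∀ t : ℝ, 0 ≤ t → ω t ⬝ᵥ (Q *ᵥ ω t) ≤ 1) →
      ∀ e : ℝ → (Fin N × Fin n → ℝ),
        (∀ t : ℝ, 0 ≤ t → HasDerivAt e (M *ᵥ e t + F *ᵥ ω t) t) →
        ∀ ε : ℝ, 0 < ε → ∃ T : ℝ, 0 ≤ T ∧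
          ∀ t : ℝ, T ≤ t → e t ⬝ᵥ (P *ᵥ e t) ≤ 1 + ε := by
  intro ω hω e he ε hε
  by_cases hempty : IsEmpty (Fin N × Fin n)
  · refine ⟨0, le_refl 0, fun t _ => ?_⟩
    have h0 : e t ⬝ᵥ (P *ᵥ e t) = 0 := by
      simp [dotProduct, Finset.univ_eq_empty]
    rw [h0]; linarith
  rw [not_isEmpty_iff] at hempty
  have hsym : Pᵀ = P := transpose_eq_of_posdef hP
  have hQ0 : ∀ ν : Fin p → ℝ, 0 ≤ ν ⬝ᵥ (Q *ᵥ ν) := posdef_dot_nonneg hQ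
  have hFne : F ≠ 0 := by
    intro h
    apply hE
    ext i k
    have h2 := congrFun (congrFun h (hempty.some.1, i)) k
    rw [hF (hempty.some.1, i) k] at h2
    simpa using h2
  -- the boundary condition (Nagumo)
  have dagger : ∀ x : Fin N × Fin n → ℝ, x ⬝ᵥ (P *ᵥ x) = 1 →
      ∀ ν : Fin p → ℝ, ν ⬝ᵥ (Q *ᵥ ν) ≤ 1 →
      x ⬝ᵥ (P *ᵥ (M *ᵥ x)) + x ⬝ᵥ (P *ᵥ (F *ᵥ ν)) ≤ 0 := by
    intro x hx1 ν hν
    obtain ⟨sol, hsol0, hsol⟩ := exists_const_input_solution M (F *ᵥ ν) x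
    have hsolinv := hinv (fun _ => ν) (fun t _ => hν) sol (fun t _ => hsol t)
      (by rw [hsol0, hx1])
    have hV : HasDerivAt (fun t => sol t ⬝ᵥ (P *ᵥ sol t))
        ((M *ᵥ sol 0 + F *ᵥ ν) ⬝ᵥ (P *ᵥ sol 0) + sol 0 ⬝ᵥ (P *ᵥ (M *ᵥ sol 0 + F *ᵥ ν))) 0 :=
      hasDerivAt_quadform P (hsol 0)
    have hd0 : (M *ᵥ sol 0 + F *ᵥ ν) ⬝ᵥ (P *ᵥ sol 0)
        + sol 0 ⬝ᵥ (P *ᵥ (M *ᵥ sol 0 + F *ᵥ ν)) ≤ 0 := by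
      refine deriv_nonpos_of_le_init hV (fun t ht => ?_)
      have h1 := hsolinv t ht
      have h2 : sol 0 ⬝ᵥ (P *ᵥ sol 0) = 1 := by rw [hsol0, hx1]
      rw [h2]; exact h1
    rw [hsol0] at hd0
    have heq : (M *ᵥ x + F *ᵥ ν) ⬝ᵥ (P *ᵥ x) + x ⬝ᵥ (P *ᵥ (M *ᵥ x + F *ᵥ ν))
        = 2 * (x ⬝ᵥ (P *ᵥ (M *ᵥ x)) + x ⬝ᵥ (P *ᵥ (F *ᵥ ν))) := by
      rw [dot_symm hsym (M *ᵥ x + F *ᵥ ν) x, Matrix.mulVec_add, dotProduct_add]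
      ring
    rw [heq] at hd0
    linarith
  have hd' := hom_dagger hP dagger
  have hstrict := strict_neg hP hQ0 hFne hd'
  obtain ⟨lam, hlam0, hgap0⟩ := exists_gap P (P * M) hP (fun x hx => by
    rw [← Matrix.mulVec_mulVec]; exact hstrict x hx)
  have hgap : ∀ x : Fin N × Fin n → ℝ,
      x ⬝ᵥ (P *ᵥ (M *ᵥ x)) ≤ -lam * (x ⬝ᵥ (P *ᵥ x)) := by
    intro x
    have := hgap0 x
    rwa [← Matrix.mulVec_mulVec] at this
  -- monotonicity of max 1 V along the trajectory
  have hmono : ∀ t₀ : ℝ, 0 ≤ t₀ → ∀ t : ℝ, t₀ ≤ t →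
      e t ⬝ᵥ (P *ᵥ e t) ≤ max 1 (e t₀ ⬝ᵥ (P *ᵥ e t₀)) := by
    intro t₀ ht₀ t ht
    set V₀ : ℝ := e t₀ ⬝ᵥ (P *ᵥ e t₀) with hV₀
    have hmaxpos : (0:ℝ) < max 1 V₀ := lt_of_lt_of_le one_pos (le_max_left _ _)
    set r : ℝ := Real.sqrt (max 1 V₀) with hr
    have hr2 : r ^ 2 = max 1 V₀ := Real.sq_sqrt hmaxpos.le
    have hr1 : 1 ≤ r := by
      nlinarith [Real.sqrt_nonneg (max 1 V₀), le_max_left (1:ℝ) V₀]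
    have hr0 : 0 < r := lt_of_lt_of_le one_pos hr1
    have hω' : ∀ u : ℝ, 0 ≤ u →
        (r⁻¹ • ω (t₀ + u)) ⬝ᵥ (Q *ᵥ (r⁻¹ • ω (t₀ + u))) ≤ 1 := by
      intro u hu
      rw [quadform_smul]
      have h1 := hω (t₀ + u) (by linarith)
      have h2 : r⁻¹ ^ 2 ≤ 1 := by
        rw [inv_pow]
        exact inv_le_one_of_one_le₀ (by nlinarith)
      nlinarith [hQ0 (ω (t₀ + u))]
    have he' : ∀ u : ℝ, 0 ≤ u →
        HasDerivAt (fun u => r⁻¹ • e (t₀ + u))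
          (M *ᵥ (r⁻¹ • e (t₀ + u)) + F *ᵥ (r⁻¹ • ω (t₀ + u))) u := by
      intro u hu
      have h1 := he (t₀ + u) (by linarith)
      have h3 : HasDerivAt (fun u : ℝ => t₀ + u) 1 u := (hasDerivAt_id u).const_add t₀
      have h2 : HasDerivAt (fun u : ℝ => e (t₀ + u))
          (M *ᵥ e (t₀ + u) + F *ᵥ ω (t₀ + u)) u := by
        have := h1.scomp u h3
        simp at this
        exact this
      have h4 := h2.const_smul r⁻¹
      refine h4.congr_deriv ?_
      rw [smul_add, Matrix.mulVec_smul, Matrix.mulVec_smul]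
    have hinit : (r⁻¹ • e (t₀ + 0)) ⬝ᵥ (P *ᵥ (r⁻¹ • e (t₀ + 0))) ≤ 1 := by
      rw [add_zero, quadform_smul, inv_pow, hr2]
      rw [inv_mul_le_iff₀ hmaxpos, mul_one]
      exact le_max_right _ _
    have hfin := hinv _ hω' _ he' hinit (t - t₀) (by linarith)
    rw [show t₀ + (t - t₀) = t by ring] at hfin
    rw [quadform_smul, inv_pow, hr2] at hfin
    calc e t ⬝ᵥ (P *ᵥ e t) = (max 1 V₀) * ((max 1 V₀)⁻¹ * (e t ⬝ᵥ (P *ᵥ e t))) := by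
          field_simp
      _ ≤ (max 1 V₀) * 1 := mul_le_mul_of_nonneg_left hfin hmaxpos.le
      _ = max 1 V₀ := mul_one _
  -- main case split
  by_cases hgood : ∃ t₀ : ℝ, 0 ≤ t₀ ∧ e t₀ ⬝ᵥ (P *ᵥ e t₀) ≤ 1 + ε
  · obtain ⟨t₀, ht₀, hV₀⟩ := hgood
    refine ⟨t₀, ht₀, fun t ht => ?_⟩
    refine le_trans (hmono t₀ ht₀ t ht) ?_
    exact max_le (by linarith) hV₀
  · exfalso
    push_neg at hgood
    have hbig : ∀ t : ℝ, 0 ≤ t → 1 + ε < e t ⬝ᵥ (P *ᵥ e t) := hgood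
    set a : ℝ := Real.sqrt (1 + ε) with ha
    have ha1 : 1 < a := by
      nlinarith [Real.sq_sqrt (show (0:ℝ) ≤ 1 + ε by linarith), Real.sqrt_nonneg (1 + ε)]
    set c : ℝ := 2 * lam * a * (a - 1) with hc
    have hcpos : 0 < c := by
      apply mul_pos
      apply mul_pos (mul_pos (by norm_num) hlam0)
      all_goals linarith
    -- the derivative bound
    have hVderiv : ∀ t : ℝ, 0 ≤ t →
        HasDerivAt (fun t => e t ⬝ᵥ (P *ᵥ e t))
          ((M *ᵥ e t + F *ᵥ ω t) ⬝ᵥ (P *ᵥ e t) + e t ⬝ᵥ (P *ᵥ (M *ᵥ e t + F *ᵥ ω t))) t :=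
      fun t ht => hasDerivAt_quadform P (he t ht)
    have hDbound : ∀ t : ℝ, 0 ≤ t →
        (M *ᵥ e t + F *ᵥ ω t) ⬝ᵥ (P *ᵥ e t) + e t ⬝ᵥ (P *ᵥ (M *ᵥ e t + F *ᵥ ω t)) ≤ -c := by
      intro t ht
      set x : Fin N × Fin n → ℝ := e t with hx
      set s : ℝ := Real.sqrt (x ⬝ᵥ (P *ᵥ x)) with hsdef
      have hVt : 1 + ε < x ⬝ᵥ (P *ᵥ x) := hbig t ht
      have hsa : a ≤ s := Real.sqrt_le_sqrt hVt.le
      have hs1 : 1 < s := lt_of_lt_of_le ha1 hsa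
      have hs0 : 0 < s := by linarith
      have hs2 : s ^ 2 = x ⬝ᵥ (P *ᵥ x) := Real.sq_sqrt (by nlinarith)
      have hq : x ⬝ᵥ (P *ᵥ (M *ᵥ x)) ≤ -lam * s ^ 2 := by rw [hs2]; exact hgap x
      have hdag := hd' x (ω t) (hω t ht)
      rw [← hsdef] at hdag
      -- s * (x⬝PFω) ≤ - q
      have hFbound : s * (x ⬝ᵥ (P *ᵥ (F *ᵥ ω t))) ≤ -(x ⬝ᵥ (P *ᵥ (M *ᵥ x))) := by linarith
      have heq2 : (M *ᵥ x + F *ᵥ ω t) ⬝ᵥ (P *ᵥ x) + x ⬝ᵥ (P *ᵥ (M *ᵥ x + F *ᵥ ω t))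
          = 2 * (x ⬝ᵥ (P *ᵥ (M *ᵥ x)) + x ⬝ᵥ (P *ᵥ (F *ᵥ ω t))) := by
        rw [dot_symm hsym (M *ᵥ x + F *ᵥ ω t) x, Matrix.mulVec_add, dotProduct_add]
        ring
      rw [heq2]
      -- from s * D/2 ≤ q (s - 1) ≤ -lam s^2 (s-1); divide by s
      have hint1 : (s - 1) * (x ⬝ᵥ (P *ᵥ (M *ᵥ x))) ≤ (s - 1) * (-lam * s ^ 2) :=
        mul_le_mul_of_nonneg_left hq (by linarith)
      have hhalf : s * (x ⬝ᵥ (P *ᵥ (M *ᵥ x)) + x ⬝ᵥ (P *ᵥ (F *ᵥ ω t)))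
          ≤ -lam * s ^ 2 * (s - 1) := by nlinarith [hFbound, hint1]
      have hint2 : a * (a - 1) ≤ s * (s - 1) :=
        mul_le_mul hsa (by linarith) (by linarith) hs0.le
      have hint3 : (lam * s) * (a * (a - 1)) ≤ (lam * s) * (s * (s - 1)) :=
        mul_le_mul_of_nonneg_left hint2 (by positivity)
      have hc2 : -lam * s ^ 2 * (s - 1) ≤ s * (-lam * a * (a - 1)) := by nlinarith [hint3]
      have hD : x ⬝ᵥ (P *ᵥ (M *ᵥ x)) + x ⬝ᵥ (P *ᵥ (F *ᵥ ω t)) ≤ -lam * a * (a - 1) :=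
        le_of_mul_le_mul_left (le_trans hhalf hc2) hs0
      rw [hc]; linarith
    -- linear decay contradiction
    set W : ℝ → ℝ := fun t => e t ⬝ᵥ (P *ᵥ e t) + c * t with hW
    have hWd : ∀ t : ℝ, 0 ≤ t → HasDerivAt W
        ((M *ᵥ e t + F *ᵥ ω t) ⬝ᵥ (P *ᵥ e t)
          + e t ⬝ᵥ (P *ᵥ (M *ᵥ e t + F *ᵥ ω t)) + c * 1) t := by
      intro t ht
      exact (hVderiv t ht).add ((hasDerivAt_id t).const_mul c)
    have hWanti : AntitoneOn W (Set.Ici 0) := by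
      apply antitoneOn_of_deriv_nonpos (convex_Ici 0)
      · intro t ht
        exact (hWd t ht).continuousAt.continuousWithinAt
      · intro t ht
        rw [interior_Ici] at ht
        exact ((hWd t (le_of_lt ht)).differentiableAt).differentiableWithinAt
      · intro t ht
        rw [interior_Ici] at ht
        rw [(hWd t (le_of_lt ht)).deriv]
        have := hDbound t (le_of_lt ht)
        linarith
    have h1 : 0 < e 0 ⬝ᵥ (P *ᵥ e 0) := lt_trans (by linarith) (hbig 0 (le_refl 0))
    set T₁ : ℝ := (e 0 ⬝ᵥ (P *ᵥ e 0) + 1) / c with hT₁def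
    have hT₁pos : 0 < T₁ := by rw [hT₁def]; positivity
    have hT := hWanti (Set.mem_Ici.2 (le_refl 0)) (Set.mem_Ici.2 hT₁pos.le) hT₁pos.le
    simp only [hW] at hT
    have h3 : c * T₁ = e 0 ⬝ᵥ (P *ᵥ e 0) + 1 := by
      rw [hT₁def]; field_simp
    have h2 := hbig T₁ hT₁pos.le
    nlinarith [hT, h2, h3]
end

section
/- Let A ∈ ℝ^{d×d} be Hurwitz and E ∈ ℝ^{d×p}. Let X₀ ∈ ℝ^{d×d} be a symmetric matrix satisfying A X₀ + X₀ A^⊤ + E E^⊤ = 0. Then for every symmetric matrix X ∈ ℝ^{d×d} with A X + X A^⊤ + E E^⊤ negative semidefinite, one has X − X₀ positive semidefinite, and consequently tr(X) ≥ tr(X₀). In other words, the solution of the Lyapunov equation minimizes the trace over all symmetric matrices satisfying the Lyapunov inequality. -/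
open Matrix NormedSpace Filter
open scoped Topology ENNReal NNReal

attribute [local instance] Matrix.linftyOpNormedRing Matrix.linftyOpNormedAlgebra

namespace LyapAux

variable {d : ℕ}

/-- The matrix exponential is a polynomial in the matrix. -/
theorem exp_eq_aeval (M : Matrix (Fin d) (Fin d) ℂ) :
    ∃ q : Polynomial ℂ, Polynomial.aeval M q = exp M := by
  have hclosed : IsClosed ((Subalgebra.toSubmodule (Polynomial.aeval (R := ℂ) M).range :
      Submodule ℂ (Matrix (Fin d) (Fin d) ℂ)) : Set (Matrix (Fin d) (Fin d) ℂ)) :=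
    Submodule.closed_of_finiteDimensional _
  have hsum : HasSum (fun n : ℕ => ((n.factorial : ℂ)⁻¹ : ℂ) • M ^ n) (exp M) := by
    rw [exp_eq_tsum ℂ]
    exact (expSeries_summable' (𝕂 := ℂ) M).hasSum
  have hmem : exp M ∈ (Subalgebra.toSubmodule (Polynomial.aeval (R := ℂ) M).range :
      Submodule ℂ (Matrix (Fin d) (Fin d) ℂ)) := by
    refine hclosed.mem_of_tendsto hsum (Filter.Eventually.of_forall fun s => ?_)
    refine Submodule.sum_mem _ fun n _ => Submodule.smul_mem _ _ ?_
    exact ⟨Polynomial.X ^ n, by simp⟩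
  obtain ⟨q, hq⟩ := hmem
  exact ⟨q, hq⟩

theorem spec_eigvec (M : Matrix (Fin d) (Fin d) ℂ) (μ : ℂ) (hμ : μ ∈ spectrum ℂ M) :
    ∃ u : Fin d → ℂ, u ≠ 0 ∧ M *ᵥ u = μ • u := by
  rw [spectrum.mem_iff] at hμ
  have hdet : (μ • (1 : Matrix (Fin d) (Fin d) ℂ) - M).det = 0 := by
    by_contra h
    exact hμ (by simpa [Matrix.isUnit_iff_isUnit_det, Algebra.algebraMap_eq_smul_one] using
      isUnit_iff_ne_zero.2 h)
  obtain ⟨u, hu0, hu⟩ := (Matrix.exists_mulVec_eq_zero_iff).mpr hdet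
  refine ⟨u, hu0, ?_⟩
  have h1 := sub_mulVec (μ • (1 : Matrix (Fin d) (Fin d) ℂ)) M u
  rw [hu] at h1
  have h2 : M *ᵥ u = (μ • (1 : Matrix (Fin d) (Fin d) ℂ)) *ᵥ u := by
    have := sub_eq_zero.mp h1.symm
    exact this.symm
  simpa [Matrix.smul_mulVec] using h2

theorem pow_eigvec (M : Matrix (Fin d) (Fin d) ℂ) (μ : ℂ) (u : Fin d → ℂ)
    (hu : M *ᵥ u = μ • u) : ∀ k : ℕ, (M ^ k) *ᵥ u = (μ ^ k) • u := by
  intro k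
  induction k with
  | zero => simp
  | succ k ih => rw [pow_succ, pow_succ, ← mulVec_mulVec, hu, mulVec_smul, ih, smul_smul,
      mul_comm]

theorem aeval_eigvec (M : Matrix (Fin d) (Fin d) ℂ) (μ : ℂ) (u : Fin d → ℂ)
    (hu : M *ᵥ u = μ • u) (q : Polynomial ℂ) :
    (Polynomial.aeval M q) *ᵥ u = q.eval μ • u := by
  induction q using Polynomial.induction_on' with
  | add p q hp hq => simp [add_mulVec, hp, hq, add_smul]
  | monomial n a =>
    rw [Polynomial.aeval_monomial, Algebra.algebraMap_eq_smul_one, smul_mul_assoc, one_mul,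
      smul_mulVec, pow_eigvec M μ u hu n, Polynomial.eval_monomial, smul_smul]

theorem exp_eigvec (M : Matrix (Fin d) (Fin d) ℂ) (μ : ℂ) (u : Fin d → ℂ)
    (hu : M *ᵥ u = μ • u) : (exp M) *ᵥ u = Complex.exp μ • u := by
  have hpow := pow_eigvec M μ u hu
  let L : Matrix (Fin d) (Fin d) ℂ →ₗ[ℂ] (Fin d → ℂ) :=
    { toFun := fun N => N *ᵥ u
      map_add' := fun N₁ N₂ => add_mulVec N₁ N₂ u
      map_smul' := fun c N => smul_mulVec c N u }
  have hL : Continuous L := L.continuous_of_finiteDimensional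
  have hsum : HasSum (fun n : ℕ => ((n.factorial : ℂ)⁻¹ : ℂ) • M ^ n) (exp M) := by
    rw [exp_eq_tsum ℂ]; exact (expSeries_summable' (𝕂 := ℂ) M).hasSum
  have hsum2 : HasSum (fun n : ℕ => ((n.factorial : ℂ)⁻¹ : ℂ) • ((μ ^ n) • u))
      ((exp M) *ᵥ u) := by
    have := hsum.map L hL
    simpa [L, Function.comp_def, smul_mulVec, hpow] using this
  have hsum3 : HasSum (fun n : ℕ => (((n.factorial : ℂ)⁻¹ : ℂ) * μ ^ n) • u)
      ((Complex.exp μ) • u) := by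
    have h4 : HasSum (fun n : ℕ => ((n.factorial : ℂ)⁻¹ : ℂ) * μ ^ n) (Complex.exp μ) := by
      have h5 := (expSeries_summable' (𝕂 := ℂ) (μ : ℂ)).hasSum
      rw [show (∑' n : ℕ, ((n.factorial : ℂ)⁻¹ : ℂ) • (μ : ℂ) ^ n) = exp μ from
        (congr_fun (exp_eq_tsum ℂ) μ).symm, ← Complex.exp_eq_exp_ℂ] at h5
      simpa [smul_eq_mul] using h5
    exact h4.smul_const u
  exact hsum2.unique (by simpa [smul_smul] using hsum3)

theorem spectrum_exp (hd : d ≠ 0) (M : Matrix (Fin d) (Fin d) ℂ) :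
    spectrum ℂ (exp M) = Complex.exp '' spectrum ℂ M := by
  have : Nonempty (Fin d) := ⟨⟨0, Nat.pos_of_ne_zero hd⟩⟩
  have hne : (spectrum ℂ M).Nonempty :=
    spectrum.nonempty_of_isAlgClosed_of_finiteDimensional ℂ M
  obtain ⟨q, hq⟩ := exp_eq_aeval M
  rw [← hq, spectrum.map_polynomial_aeval_of_nonempty M q hne]
  apply Set.image_congr
  intro μ hμ
  obtain ⟨u, hu0, hu⟩ := spec_eigvec M μ hμ
  have h1 := aeval_eigvec M μ u hu q
  have h2 := exp_eigvec M μ u hu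
  rw [hq, h2] at h1
  obtain ⟨i, hi⟩ := Function.ne_iff.mp hu0
  have := congr_fun h1 i
  simp only [Pi.smul_apply, smul_eq_mul] at this
  exact (mul_right_cancel₀ (by simpa using hi) this).symm

theorem tendsto_pow_of_spectralRadius_lt_one {A : Type*} [NormedRing A] [NormedAlgebra ℂ A]
    [CompleteSpace A] (a : A) (h : spectralRadius ℂ a < 1) :
    Tendsto (fun n : ℕ => a ^ n) atTop (𝓝 0) := by
  obtain ⟨c, hc1, hc2⟩ := exists_between h
  lift c to ℝ≥0 using (hc2.trans_le le_top).ne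
  have hgel := spectrum.pow_nnnorm_pow_one_div_tendsto_nhds_spectralRadius a
  have hev : ∀ᶠ n : ℕ in atTop, (‖a ^ n‖₊ : ℝ≥0∞) ^ (1 / n : ℝ) < (c : ℝ≥0∞) :=
    hgel.eventually_lt_const hc1
  have hr1 : (c : ℝ) < 1 := by exact_mod_cast hc2
  have hbound : ∀ᶠ n : ℕ in atTop, ‖a ^ n‖ ≤ (c : ℝ) ^ n := by
    filter_upwards [hev, eventually_ge_atTop 1] with n hn hn1
    have hne : (n : ℝ) ≠ 0 := by positivity
    have h2 : ((‖a ^ n‖₊ : ℝ≥0∞) ^ (1 / n : ℝ)) ^ (n : ℝ) ≤ (c : ℝ≥0∞) ^ (n : ℝ) :=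
      ENNReal.rpow_le_rpow hn.le (by positivity)
    rw [← ENNReal.rpow_mul, one_div, inv_mul_cancel₀ hne, ENNReal.rpow_one] at h2
    rw [show ((c : ℝ≥0∞) ^ (n : ℝ)) = ((c ^ n : ℝ≥0) : ℝ≥0∞) by
      rw [ENNReal.rpow_natCast, ENNReal.coe_pow], ENNReal.coe_le_coe] at h2
    have h3 : (‖a ^ n‖₊ : ℝ) ≤ ((c ^ n : ℝ≥0) : ℝ) := by exact_mod_cast h2
    simpa using h3
  exact squeeze_zero_norm' hbound
    (tendsto_pow_atTop_nhds_zero_of_lt_one (by positivity) hr1)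

theorem exp_cpx_tendsto_zero (hd : d ≠ 0) (M : Matrix (Fin d) (Fin d) ℂ)
    (hM : ∀ μ ∈ spectrum ℂ M, μ.re < 0) :
    Tendsto (fun t : ℝ => exp (t • M)) atTop (𝓝 0) := by
  have : Nonempty (Fin d) := ⟨⟨0, Nat.pos_of_ne_zero hd⟩⟩
  have hrad : spectralRadius ℂ (exp M) < 1 := by
    have h1 : spectralRadius ℂ (exp M) < ((1 : ℝ≥0) : ℝ≥0∞) := by
      refine spectrum.spectralRadius_lt_of_forall_lt _ fun z hz => ?_
      rw [spectrum_exp hd M] at hz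
      obtain ⟨μ, hμ, rfl⟩ := hz
      have h2 : ‖Complex.exp μ‖ < 1 := by
        rw [Complex.norm_exp]
        exact Real.exp_lt_one_iff.mpr (hM μ hμ)
      exact_mod_cast h2
    simpa using h1
  have hpow : Tendsto (fun n : ℕ => exp M ^ n) atTop (𝓝 0) :=
    tendsto_pow_of_spectralRadius_lt_one _ hrad
  -- bound on the fractional factor
  have hcont : Continuous fun s : ℝ => exp (s • M) :=
    exp_continuous.comp (by continuity)
  obtain ⟨K, hK⟩ := (isCompact_Icc (a := (0 : ℝ)) (b := 1)).exists_bound_of_continuousOn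
    hcont.continuousOn
  have key : ∀ t : ℝ, 0 ≤ t → ‖exp (t • M)‖ ≤ ‖exp M ^ ⌊t⌋₊‖ * K := by
    intro t ht
    have hsplit : t • M = (⌊t⌋₊ : ℝ) • M + (t - ⌊t⌋₊) • M := by
      rw [← add_smul]; ring_nf
    have hcomm : Commute ((⌊t⌋₊ : ℝ) • M) ((t - ⌊t⌋₊) • M) :=
      (Commute.refl M).smul_left _ |>.smul_right _
    rw [hsplit, Matrix.exp_add_of_commute _ _ hcomm]
    have h1 : exp ((⌊t⌋₊ : ℝ) • M) = exp M ^ ⌊t⌋₊ := by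
      rw [Nat.cast_smul_eq_nsmul ℝ, Matrix.exp_nsmul]
    rw [h1]
    calc ‖exp M ^ ⌊t⌋₊ * exp ((t - ⌊t⌋₊) • M)‖
        ≤ ‖exp M ^ ⌊t⌋₊‖ * ‖exp ((t - ⌊t⌋₊) • M)‖ := norm_mul_le _ _
      _ ≤ ‖exp M ^ ⌊t⌋₊‖ * K := by
          refine mul_le_mul_of_nonneg_left (hK _ ⟨?_, ?_⟩) (norm_nonneg _)
          · exact sub_nonneg.mpr (Nat.floor_le ht)
          · exact le_of_lt (by linarith [Nat.lt_floor_add_one t])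
  have hnorm : Tendsto (fun n : ℕ => ‖exp M ^ n‖ * K) atTop (𝓝 0) := by
    simpa using (tendsto_norm_zero.comp hpow).mul_const K
  have hcomp : Tendsto (fun t : ℝ => ‖exp M ^ ⌊t⌋₊‖ * K) atTop (𝓝 0) :=
    hnorm.comp tendsto_nat_floor_atTop
  refine squeeze_zero_norm' ?_ hcomp
  filter_upwards [eventually_ge_atTop (0 : ℝ)] with t ht using key t ht

/-- Norm is preserved by complexification (linfty operator norm). -/
theorem norm_map_complex (M : Matrix (Fin d) (Fin d) ℝ) :
    ‖M.map (algebraMap ℝ ℂ)‖ = ‖M‖ := by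
  rw [Matrix.linfty_opNorm_def, Matrix.linfty_opNorm_def]
  congr 1
  apply Finset.sup_congr rfl
  intro i _
  apply Finset.sum_congr rfl
  intro j _
  simp [Matrix.map_apply, nnnorm, Complex.norm_real]

/-- The real matrix exponential complexifies. -/
theorem map_exp_complex (M : Matrix (Fin d) (Fin d) ℝ) :
    (exp M).map (algebraMap ℝ ℂ) = exp (M.map (algebraMap ℝ ℂ)) := by
  have hcont : Continuous ((algebraMap ℝ ℂ).mapMatrix :
      Matrix (Fin d) (Fin d) ℝ →+* Matrix (Fin d) (Fin d) ℂ) := by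
    show Continuous fun N : Matrix (Fin d) (Fin d) ℝ => N.map (algebraMap ℝ ℂ)
    exact Continuous.matrix_map continuous_id (continuous_algebraMap ℝ ℂ)
  have h1 := map_exp ((algebraMap ℝ ℂ).mapMatrix :
      Matrix (Fin d) (Fin d) ℝ →+* Matrix (Fin d) (Fin d) ℂ) hcont M
  have h2 : (exp : Matrix (Fin d) (Fin d) ℂ → Matrix (Fin d) (Fin d) ℂ) = exp :=
    rfl
  calc (exp M).map (algebraMap ℝ ℂ)
      = (algebraMap ℝ ℂ).mapMatrix (exp M) := rfl
    _ = exp ((algebraMap ℝ ℂ).mapMatrix M) := h1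
    _ = exp (M.map (algebraMap ℝ ℂ)) := rfl

theorem exp_real_tendsto_zero (hd : d ≠ 0) (A : Matrix (Fin d) (Fin d) ℝ)
    (hA : ∀ μ ∈ spectrum ℂ (A.map (algebraMap ℝ ℂ)), μ.re < 0) :
    Tendsto (fun t : ℝ => exp (t • A)) atTop (𝓝 0) := by
  have hc := exp_cpx_tendsto_zero hd (A.map (algebraMap ℝ ℂ)) hA
  refine tendsto_zero_iff_norm_tendsto_zero.mpr ?_
  replace hc := tendsto_zero_iff_norm_tendsto_zero.mp hc
  convert hc using 2 with t
  rw [← norm_map_complex, map_exp_complex]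
  have hsm : ((t • A).map (algebraMap ℝ ℂ)) = t • (A.map (algebraMap ℝ ℂ)) := by
    ext i j
    simp [Matrix.map_apply, Complex.real_smul]
  rw [hsm]

end LyapAux

open LyapAux in
/-- **Lemma A.16 of Polyak.** If `A` is Hurwitz and `X₀` is a symmetric
solution of `A X₀ + X₀ Aᵀ + E Eᵀ = 0`, then every symmetric `X` with
`A X + X Aᵀ + E Eᵀ` negative semidefinite satisfies `X - X₀ ⪰ 0`, and hence
`tr X₀ ≤ tr X`: the Lyapunov-equation solution minimizes the trace. -/
theorem lyapunov_solution_minimizes_trace (d p : ℕ)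
    (A : Matrix (Fin d) (Fin d) ℝ)
    (hA : ∀ μ ∈ spectrum ℂ (A.map (algebraMap ℝ ℂ)), μ.re < 0)
    (E : Matrix (Fin d) (Fin p) ℝ)
    (X₀ : Matrix (Fin d) (Fin d) ℝ) (hX₀symm : X₀.IsSymm)
    (hX₀ : A * X₀ + X₀ * Aᵀ + E * Eᵀ = 0) :
    ∀ X : Matrix (Fin d) (Fin d) ℝ, X.IsSymm →
      (∀ v : Fin d → ℝ, v ⬝ᵥ ((A * X + X * Aᵀ + E * Eᵀ) *ᵥ v) ≤ 0) →
      (∀ v : Fin d → ℝ, 0 ≤ v ⬝ᵥ ((X - X₀) *ᵥ v)) ∧ X₀.trace ≤ X.trace := by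
  intro X hXsymm hXle
  rcases Nat.eq_zero_or_pos d with hd | hdpos
  · subst hd
    constructor
    · intro v
      simp [dotProduct]
    · simp [Matrix.trace]
  have hd : d ≠ 0 := hdpos.ne'
  -- the Lyapunov inequality for Δ = X - X₀
  set Δ := X - X₀ with hΔ
  have hSeq : A * Δ + Δ * Aᵀ = A * X + X * Aᵀ + E * Eᵀ := by
    have h1 : A * Δ + Δ * Aᵀ =
        (A * X + X * Aᵀ + E * Eᵀ) - (A * X₀ + X₀ * Aᵀ + E * Eᵀ) := by
      rw [hΔ]; noncomm_ring
    rw [h1, hX₀, sub_zero]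
  have hS : ∀ u : Fin d → ℝ, u ⬝ᵥ ((A * Δ + Δ * Aᵀ) *ᵥ u) ≤ 0 := by
    intro u; rw [hSeq]; exact hXle u
  -- the main positivity claim
  have main : ∀ v : Fin d → ℝ, 0 ≤ v ⬝ᵥ (Δ *ᵥ v) := by
    intro v
    set P : ℝ → Matrix (Fin d) (Fin d) ℝ := fun t => exp (t • A) with hP
    set Q : ℝ → Matrix (Fin d) (Fin d) ℝ := fun t => exp (t • Aᵀ) with hQ
    have hQP : ∀ t, Q t = (P t)ᵀ := by
      intro t
      rw [hP, hQ]
      show exp (t • Aᵀ) = (exp (t • A))ᵀ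
      rw [← Matrix.transpose_smul, Matrix.exp_transpose]
    -- the scalar function
    set L : Matrix (Fin d) (Fin d) ℝ →ₗ[ℝ] ℝ :=
      { toFun := fun N => v ⬝ᵥ (N *ᵥ v)
        map_add' := fun N₁ N₂ => by simp [add_mulVec, dotProduct_add]
        map_smul' := fun c N => by simp [smul_mulVec, dotProduct_smul] } with hL
    have hLcont : Continuous L := L.continuous_of_finiteDimensional
    set g : ℝ → ℝ := fun t => L (P t * Δ * Q t) with hg
    -- derivative
    have hderiv : ∀ t : ℝ, HasDerivAt g (L (P t * (A * Δ + Δ * Aᵀ) * Q t)) t := by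
      intro t
      have hPd : HasDerivAt P (A * P t) t := hasDerivAt_exp_smul_const' A t
      have hQd : HasDerivAt Q (Aᵀ * Q t) t := hasDerivAt_exp_smul_const' Aᵀ t
      have hh : HasDerivAt (fun s => P s * Δ * Q s)
          ((A * P t * Δ) * Q t + (P t * Δ) * (Aᵀ * Q t)) t :=
        (hPd.mul_const Δ).mul hQd
      have hcommA : A * P t = P t * A := by
        have : Commute A (t • A) := (Commute.refl A).smul_right t
        exact this.exp_right.eq
      have heq : (A * P t * Δ) * Q t + (P t * Δ) * (Aᵀ * Q t)
          = P t * (A * Δ + Δ * Aᵀ) * Q t := by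
        rw [hcommA]; noncomm_ring
      rw [heq] at hh
      exact (L.toContinuousLinearMap.hasFDerivAt.comp_hasDerivAt t hh)
    -- derivative is nonpositive
    have hderiv_nonpos : ∀ t : ℝ, L (P t * (A * Δ + Δ * Aᵀ) * Q t) ≤ 0 := by
      intro t
      set S := A * Δ + Δ * Aᵀ with hSdef
      have h1 : L (P t * S * Q t) = (Q t *ᵥ v) ⬝ᵥ (S *ᵥ (Q t *ᵥ v)) := by
        show v ⬝ᵥ ((P t * S * Q t) *ᵥ v) = _
        rw [← mulVec_mulVec, ← mulVec_mulVec, dotProduct_mulVec v (P t),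
          show v ᵥ* P t = Q t *ᵥ v by rw [hQP t, ← vecMul_transpose, transpose_transpose],
          dotProduct_mulVec]
      rw [h1]
      exact hS _
    -- g is antitone
    have hanti : Antitone g := by
      refine antitone_of_deriv_nonpos (fun t => (hderiv t).differentiableAt) fun t => ?_
      rw [(hderiv t).deriv]
      exact hderiv_nonpos t
    -- g tends to 0 at infinity
    have hPz : Tendsto P atTop (𝓝 0) := exp_real_tendsto_zero hd A hA
    have hFz : Tendsto g atTop (𝓝 0) := by
      have hcont2 : Continuous fun N : Matrix (Fin d) (Fin d) ℝ => L (N * Δ * Nᵀ) :=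
        hLcont.comp ((continuous_id.mul continuous_const).mul continuous_id.matrix_transpose)
      have := (hcont2.tendsto 0).comp hPz
      simp only [Function.comp_def] at this
      have h0 : L ((0 : Matrix (Fin d) (Fin d) ℝ) * Δ * (0 :
          Matrix (Fin d) (Fin d) ℝ)ᵀ) = 0 := by simp
      have hgeq : (fun t => L (P t * Δ * (P t)ᵀ)) = g := by
        funext s
        show L (P s * Δ * (P s)ᵀ) = L (P s * Δ * Q s)
        rw [hQP s]
      rw [hgeq] at this
      simpa [h0] using this
    -- conclusion
    have hg0 : ∀ t : ℝ, 0 ≤ t → g t ≤ g 0 := fun t ht => hanti ht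
    have h00 : (0 : ℝ) ≤ g 0 := by
      refine le_of_tendsto hFz ?_
      filter_upwards [eventually_ge_atTop (0 : ℝ)] with t ht using hg0 t ht
    have hgval : g 0 = v ⬝ᵥ (Δ *ᵥ v) := by
      rw [hg]
      show L (P 0 * Δ * Q 0) = _
      have hP0 : P 0 = 1 := by
        show exp ((0 : ℝ) • A) = 1
        rw [zero_smul, exp_zero]
      have hQ0 : Q 0 = 1 := by
        show exp ((0 : ℝ) • Aᵀ) = 1
        rw [zero_smul, exp_zero]
      rw [hP0, hQ0, one_mul, mul_one]
      rfl
    rw [← hgval]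
    exact h00
  refine ⟨main, ?_⟩
  have htr : 0 ≤ Δ.trace := by
    rw [Matrix.trace]
    refine Finset.sum_nonneg fun i _ => ?_
    have := main (Pi.single i 1)
    simpa [Matrix.mulVec_single, dotProduct, Pi.single_apply, Finset.sum_ite_eq'] using this
  have := Matrix.trace_sub X X₀
  rw [hΔ] at htr
  rw [this] at htr
  linarith
end
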